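/- arXiv:2106.12055 — 6 statements merged into one kernel-verified Lean document; each statement's English description precedes it below -/
import Mathlib

section
/- (Characterization of anchored sets.) Given H ⊆ J, a vector x is a schedule of G(p) such that H is x-anchored for Δ if and only if x is a schedule of the augmented graph G̃_H, obtained from G(p) by adding, for every i ∈ H ∪ {s} and j ∈ H with i ≺ j, an arc (i,j) of length L^Δ(i,j). Equivalently, H is x-anchored if and only if x is a schedule of G(p) satisfying x_j − x_i ≥ L^Δ(i,j) for all i ∈ H ∪ {s}, j ∈ H with i ≺ j. -/
/-- Length of a path (given as a list of vertices) when each arc `(i,j)` has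
length `q i` (the duration of its source vertex). -/
def PathLen {V : Type*} (q : V → ℝ) (l : List V) : ℝ := (l.dropLast.map q).sum

/-- `l` is a path from `i` to `j` in the digraph with arc relation `A`. -/
def IsPath {V : Type*} (A : V → V → Prop) (i j : V) (l : List V) : Prop :=
  l ≠ [] ∧ l.Chain' A ∧ l.head? = some i ∧ l.getLast? = some j

/-- Length of a path for arc-indexed weights `w`. -/
def LenW {V : Type*} (w : V → V → ℝ) : List V → ℝ
  | a :: b :: l => w a b + LenW w (b :: l)
  | _ => 0

/-- `x` is a schedule of the precedence graph `(V, A)` with durations `q` and source `s`. -/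
def Sched {V : Type*} (A : V → V → Prop) (s : V) (q x : V → ℝ) : Prop :=
  x s = 0 ∧ (∀ v, 0 ≤ x v) ∧ ∀ i j, A i j → q i ≤ x j - x i

/-- `H` is `x`-anchored for the uncertainty set `Δ`. -/
def XAnchored {V : Type*} (A : V → V → Prop) (s : V) (p : V → ℝ)
    (Δ : Set (V → ℝ)) (x : V → ℝ) (H : Set V) : Prop :=
  ∀ δ ∈ Δ, ∃ y, Sched A s (fun v => p v + δ v) y ∧ ∀ i ∈ H, y i = x i

/-- `L` is the longest `i`–`j` path length under durations `q`. -/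
def IsLongest {V : Type*} (A : V → V → Prop) (q : V → ℝ) (i j : V) (L : ℝ) : Prop :=
  IsGreatest {r | ∃ l, IsPath A i j l ∧ PathLen q l = r} L

/-- `L` is the worst-case longest `i`–`j` path length over the uncertainty set `Δ`. -/
def IsWorst {V : Type*} (A : V → V → Prop) (p : V → ℝ) (Δ : Set (V → ℝ))
    (i j : V) (L : ℝ) : Prop :=
  IsGreatest {r | ∃ δ ∈ Δ, ∃ l, IsPath A i j l ∧ PathLen (fun v => p v + δ v) l = r} L

section Aux
variable {V : Type*} {A : V → V → Prop}

lemma isPath_singleton (A : V → V → Prop) (v : V) : IsPath A v v [v] :=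
  ⟨by simp, List.isChain_singleton v, rfl, rfl⟩

lemma pathLen_singleton (q : V → ℝ) (v : V) : PathLen q [v] = 0 := by
  simp [PathLen]

lemma pathLen_nonneg {q : V → ℝ} (hq : ∀ v, 0 ≤ q v) (l : List V) : 0 ≤ PathLen q l := by
  apply List.sum_nonneg
  intro r hr
  simp only [List.mem_map] at hr
  obtain ⟨a, -, rfl⟩ := hr
  exact hq a

lemma isPath_append {i j k : V} {l : List V} (hl : IsPath A i j l) (hjk : A j k) :
    IsPath A i k (l ++ [k]) := by
  obtain ⟨hne, hc, hh, hlast⟩ := hl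
  refine ⟨by simp, ?_, ?_, ?_⟩
  · rw [List.Chain', List.isChain_append]
    refine ⟨hc, List.isChain_singleton k, ?_⟩
    intro a ha b hb
    simp only [List.head?_cons, Option.mem_def, Option.some.injEq] at hb
    rw [Option.mem_def, hlast] at ha
    rw [← hb, ← Option.some.inj ha]
    exact hjk
  · obtain ⟨a, l', rfl⟩ := List.exists_cons_of_ne_nil hne
    simpa using hh
  · simp [List.getLast?_concat]

lemma pathLen_append (q : V → ℝ) {i j : V} {l : List V} (hl : IsPath A i j l) (k : V) :
    PathLen q (l ++ [k]) = PathLen q l + q j := by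
  have hne : l ≠ [] := hl.1
  have hj : l.getLast hne = j := by
    have h2 := hl.2.2.2
    rw [List.getLast?_eq_getLast hne] at h2
    exact Option.some.inj h2
  have hdecomp : l.dropLast ++ [j] = l := by
    rw [← hj]; exact List.dropLast_append_getLast hne
  calc PathLen q (l ++ [k]) = (l.map q).sum := by
        show ((l ++ [k]).dropLast.map q).sum = _
        rw [show (l ++ [k]).dropLast = l from List.dropLast_concat]
    _ = ((l.dropLast ++ [j]).map q).sum := by rw [hdecomp]
    _ = PathLen q l + q j := by simp [PathLen]

lemma sched_path_bound {s : V} {q y : V → ℝ} (hy : Sched A s q y) :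
    ∀ (l : List V) (i j : V), IsPath A i j l → PathLen q l ≤ y j - y i
  | [], i, j, h => absurd rfl h.1
  | [a], i, j, h => by
      obtain ⟨-, -, hh, hl⟩ := h
      simp only [List.head?_cons, Option.some.injEq] at hh
      simp only [List.getLast?_singleton, Option.some.injEq] at hl
      subst hh; subst hl
      simp [pathLen_singleton]
  | a :: b :: l, i, j, h => by
      obtain ⟨-, hc, hh, hl⟩ := h
      rw [List.Chain', List.isChain_cons_cons] at hc
      simp only [List.head?_cons, Option.some.injEq] at hh
      subst hh
      have htail : IsPath A b j (b :: l) :=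
        ⟨by simp, hc.2, rfl, by simpa [List.getLast?_cons_cons] using hl⟩
      have ih := sched_path_bound hy (b :: l) b j htail
      have harc := hy.2.2 a b hc.1
      have hlen : PathLen q (a :: b :: l) = q a + PathLen q (b :: l) := by
        simp [PathLen]
      linarith

lemma transGen_path {i j : V} (h : Relation.TransGen A i j) : ∃ l, IsPath A i j l := by
  induction h with
  | single hab => exact ⟨[i, _], ⟨by simp, by simp [List.Chain', hab], rfl, rfl⟩⟩
  | tail _ hbc ih =>
      obtain ⟨l, hl⟩ := ih
      exact ⟨l ++ [_], isPath_append hl hbc⟩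

lemma isPath_cases : ∀ (l : List V) {i j : V}, IsPath A i j l →
    (i = j ∧ l = [i]) ∨ Relation.TransGen A i j
  | [], i, j, h => absurd rfl h.1
  | [a], i, j, h => by
      obtain ⟨-, -, hh, hl⟩ := h
      simp only [List.head?_cons, Option.some.injEq] at hh
      simp only [List.getLast?_singleton, Option.some.injEq] at hl
      subst hh; subst hl
      exact Or.inl ⟨rfl, rfl⟩
  | a :: b :: l, i, j, h => by
      obtain ⟨-, hc, hh, hl⟩ := h
      rw [List.Chain', List.isChain_cons_cons] at hc
      simp only [List.head?_cons, Option.some.injEq] at hh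
      subst hh
      have htail : IsPath A b j (b :: l) :=
        ⟨by simp, hc.2, rfl, by simpa [List.getLast?_cons_cons] using hl⟩
      rcases isPath_cases (b :: l) htail with ⟨rfl, -⟩ | ht
      · exact Or.inr (Relation.TransGen.single hc.1)
      · exact Or.inr ((Relation.TransGen.single hc.1).trans ht)

end Aux


/-- characterization of anchored sets: `x` is a schedule of `G(p)` such
that `H` is `x`-anchored iff `x` is a schedule of `G(p)` satisfying
`x_j - x_i ≥ L^Δ(i,j)` for all `i ∈ H ∪ {s}`, `j ∈ H` with `i ≺ j`. -/
theorem anchored_characterization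
    {V : Type*} [Fintype V] (A : V → V → Prop) (s t : V)
    (p : V → ℝ) (hp : ∀ v, 0 ≤ p v) (hps : p s = 0)
    (hacyc : ∀ v, ¬ Relation.TransGen A v v)
    (hsrc : ∀ v, v ≠ s → Relation.TransGen A s v)
    (hsink : ∀ v, v ≠ t → Relation.TransGen A v t)
    (Δ : Set (V → ℝ)) (hΔne : Δ.Nonempty) (hΔnonneg : ∀ δ ∈ Δ, ∀ v, 0 ≤ δ v)
    (hΔst : ∀ δ ∈ Δ, δ s = 0 ∧ δ t = 0)
    (LΔ : V → V → ℝ)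
    (hLΔ : ∀ i j, Relation.TransGen A i j → IsWorst A p Δ i j (LΔ i j))
    (H : Set V) (hHs : s ∉ H) (hHt : t ∉ H) (x : V → ℝ) :
    (Sched A s p x ∧ XAnchored A s p Δ x H) ↔
      (Sched A s p x ∧ ∀ i j, (i ∈ H ∨ i = s) → j ∈ H →
        Relation.TransGen A i j → LΔ i j ≤ x j - x i) := by
  constructor
  · rintro ⟨hx, hanch⟩
    refine ⟨hx, fun i j hi hj hij => ?_⟩
    obtain ⟨δ, hδ, l, hl, hlen⟩ := (hLΔ i j hij).1
    obtain ⟨y, hy, hyx⟩ := hanch δ hδ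
    have hb := sched_path_bound hy l i j hl
    have hyj : y j = x j := hyx j hj
    have hyi : y i = x i := by
      rcases hi with hi | rfl
      · exact hyx i hi
      · rw [hy.1, hx.1]
    rw [hlen, hyi, hyj] at hb
    exact hb
  · rintro ⟨hx, hineq⟩
    refine ⟨hx, fun δ hδ => ?_⟩
    set q : V → ℝ := fun v => p v + δ v with hq
    have hq0 : ∀ v, 0 ≤ q v := fun v => add_nonneg (hp v) (hΔnonneg δ hδ v)
    set S : V → Set ℝ :=
      fun v => {r | ∃ h, (h ∈ H ∨ h = s) ∧ ∃ l, IsPath A h v l ∧ x h + PathLen q l = r}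
      with hS
    have hmemS : ∀ v h, (h ∈ H ∨ h = s) → ∀ l, IsPath A h v l →
        x h + PathLen q l ∈ S v := by
      intro v h hh l hl
      exact ⟨h, hh, l, hl, rfl⟩
    have hpath_le : ∀ h v (l : List V), Relation.TransGen A h v → IsPath A h v l →
        PathLen q l ≤ LΔ h v := fun h v l ht hl => (hLΔ h v ht).2 ⟨δ, hδ, l, hl, rfl⟩
    have helem : ∀ v r, r ∈ S v →
        r = x v ∨ ∃ h, (h ∈ H ∨ h = s) ∧ Relation.TransGen A h v ∧ r ≤ x h + LΔ h v := by
      rintro v r ⟨h, hh, l, hl, rfl⟩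
      rcases isPath_cases l hl with ⟨rfl, rfl⟩ | ht
      · left; rw [pathLen_singleton, add_zero]
      · right; exact ⟨h, hh, ht, by linarith [hpath_le h v l ht hl]⟩
    have hSne : ∀ v, (S v).Nonempty := by
      intro v
      by_cases hv : v = s
      · exact ⟨x s + PathLen q [s], by
          rw [hv]; exact hmemS s s (Or.inr rfl) [s] (isPath_singleton A s)⟩
      · obtain ⟨l, hl⟩ := transGen_path (hsrc v hv)
        exact ⟨x s + PathLen q l, hmemS v s (Or.inr rfl) l hl⟩
    have hSbdd : ∀ v, BddAbove (S v) := by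
      intro v
      obtain ⟨B, hB⟩ : ∃ B, ∀ h : V, max (x h) (x h + LΔ h v) ≤ B := by
        have hVne : ((Finset.univ : Finset V).image (fun h : V => max (x h) (x h + LΔ h v))).Nonempty :=
          (Finset.univ_nonempty_iff.mpr ⟨s⟩).image _
        exact ⟨((Finset.univ : Finset V).image (fun h : V => max (x h) (x h + LΔ h v))).max' hVne,
          fun h => Finset.le_max' _ _
            (Finset.mem_image_of_mem (fun h : V => max (x h) (x h + LΔ h v)) (Finset.mem_univ h))⟩
      refine ⟨B, fun r hr => ?_⟩
      rcases helem v r hr with rfl | ⟨h, -, -, hle⟩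
      · exact le_trans (le_max_left _ _) (hB v)
      · exact le_trans (hle.trans (le_max_right _ _)) (hB h)
    have hyH : ∀ v ∈ H, sSup (S v) = x v := by
      intro v hv
      apply le_antisymm
      · apply csSup_le (hSne v)
        intro r hr
        rcases helem v r hr with rfl | ⟨h, hh, ht, hle⟩
        · exact le_refl _
        · have := hineq h v hh hv ht
          linarith
      · have := hmemS v v (Or.inl hv) [v] (isPath_singleton A v)
        rw [pathLen_singleton, add_zero] at this
        exact le_csSup (hSbdd v) this
    have hys : sSup (S s) = 0 := by
      apply le_antisymm
      · apply csSup_le (hSne s)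
        rintro r ⟨h, hh, l, hl, rfl⟩
        rcases isPath_cases l hl with ⟨rfl, rfl⟩ | ht
        · rw [pathLen_singleton, add_zero, hx.1]
        · exfalso
          rcases hh with hh | hhs
          · exact hacyc s ((hsrc h (fun he => hHs (he ▸ hh))).trans ht)
          · exact hacyc s (hhs ▸ ht)
      · have := hmemS s s (Or.inr rfl) [s] (isPath_singleton A s)
        rw [pathLen_singleton, add_zero, hx.1] at this
        exact le_csSup (hSbdd s) this
    have hynn : ∀ v, 0 ≤ sSup (S v) := by
      intro v
      by_cases hv : v = s
      · rw [hv, hys]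
      · obtain ⟨l, hl⟩ := transGen_path (hsrc v hv)
        have h2 := le_csSup (hSbdd v) (hmemS v s (Or.inr rfl) l hl)
        have h3 := pathLen_nonneg hq0 l
        rw [hx.1] at h2
        linarith
    have harc : ∀ i j, A i j → q i ≤ sSup (S j) - sSup (S i) := by
      intro i j hij
      have h1 : sSup (S i) ≤ sSup (S j) - q i := by
        apply csSup_le (hSne i)
        rintro r ⟨h, hh, l, hl, rfl⟩
        have h2 := le_csSup (hSbdd j) (hmemS j h hh (l ++ [j]) (isPath_append hl hij))
        rw [pathLen_append q hl j] at h2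
        linarith
      linarith
    exact ⟨fun v => sSup (S v), ⟨hys, hynn, harc⟩, hyH⟩
end

section
/- (Validity of formulation (Dom).) Let h ∈ {0,1}^J and H = {i : h_i = 1}. There exists z ∈ ℝ₊^{J∪{s,t}} with z_s = 0, z_t ≤ M, and z_j − z_i ≥ L⁰(i,j) + (L^Δ(i,j) − L⁰(i,j)) h_j for all i ≺ j (with h_s = 1, h_t = 0) if and only if H is an anchored set, i.e., there exists a schedule x of G(p) with x_t ≤ M such that H is x-anchored for Δ. -/
section Aux
variable {V : Type*} {A : V → V → Prop}

lemma pathLen_mono {q q' : V → ℝ} (h : ∀ v, q v ≤ q' v) (l : List V) :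
    PathLen q l ≤ PathLen q' l :=
  List.sum_le_sum (fun i _ => h i)

lemma pathLen_pair (q : V → ℝ) (i j : V) : PathLen q [i, j] = q i := by
  simp [PathLen]

lemma isPath_pair {i j : V} (h : A i j) : IsPath A i j [i, j] :=
  ⟨by simp, by simp [List.Chain', h], rfl, rfl⟩

lemma pathLen_cons (q : V → ℝ) (a : V) {l : List V} (h : l ≠ []) :
    PathLen q (a :: l) = q a + PathLen q l := by
  unfold PathLen
  rw [List.dropLast_cons_of_ne_nil h]
  simp

lemma isPath_append_s6 {a b c : V} {l1 l2 : List V}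
    (h1 : IsPath A a b l1) (h2 : IsPath A b c l2) :
    IsPath A a c (l1.dropLast ++ l2) ∧
      ∀ q : V → ℝ, PathLen q (l1.dropLast ++ l2) = PathLen q l1 + PathLen q l2 := by
  obtain ⟨h1ne, h1c, h1h, h1l⟩ := h1
  obtain ⟨h2ne, h2c, h2h, h2l⟩ := h2
  have hb : l1.getLast h1ne = b := by
    rw [List.getLast?_eq_getLast h1ne] at h1l; exact Option.some.inj h1l
  have hl1 : l1.dropLast ++ [b] = l1 := by
    rw [← hb]; exact List.dropLast_append_getLast h1ne
  have hchain1 : List.Chain' A (l1.dropLast ++ [b]) := by rw [hl1]; exact h1c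
  rw [List.Chain', List.isChain_append] at hchain1
  constructor
  · refine ⟨by simp [h2ne], ?_, ?_, ?_⟩
    · rw [List.Chain', List.isChain_append]
      refine ⟨hchain1.1, h2c, ?_⟩
      intro x hx y hy
      rw [h2h] at hy
      cases hy
      exact hchain1.2.2 x hx b rfl
    · rcases List.eq_nil_or_concat l1.dropLast with hnil | ⟨L, e, hcon⟩
      · rw [hnil, List.nil_append, h2h]
        have : l1 = [b] := by rw [← hl1, hnil]; rfl
        rw [this] at h1h
        simpa using h1h
      · have hdne : l1.dropLast ≠ [] := by simp [hcon]
        rw [List.head?_append_of_ne_nil _ hdne]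
        rw [← hl1, List.head?_append_of_ne_nil _ hdne] at h1h
        exact h1h
    · rw [List.getLast?_append_of_ne_nil _ h2ne]
      exact h2l
  · intro q
    unfold PathLen
    rw [List.dropLast_append_of_ne_nil h2ne, List.map_append, List.sum_append]

lemma isPath_snoc {i j k : V} {l : List V} (h : IsPath A i j l) (hjk : A j k) :
    IsPath A i k (l ++ [k]) ∧
      ∀ q : V → ℝ, PathLen q (l ++ [k]) = PathLen q l + q j := by
  have h2 := isPath_append_s6 h (isPath_pair hjk)
  have hb : l.getLast h.1 = j := by
    have := h.2.2.2
    rw [List.getLast?_eq_getLast h.1] at this; exact Option.some.inj this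
  have hl1 : l.dropLast ++ [j, k] = l ++ [k] := by
    have : l.dropLast ++ [j] = l := by rw [← hb]; exact List.dropLast_append_getLast h.1
    rw [← this]; simp
  rw [hl1] at h2
  refine ⟨h2.1, fun q => by rw [h2.2 q, pathLen_pair]⟩

lemma chain_reflTransGen : ∀ l : List V, l.Chain' A → ∀ a b, l.head? = some a →
    l.getLast? = some b → Relation.ReflTransGen A a b := by
  intro l
  induction l with
  | nil => intro _ a b h; simp at h
  | cons c l ih =>
    intro hc a b ha hb
    cases l with
    | nil =>
      simp at ha hb; subst ha; rw [hb]
    | cons d l' =>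
      have h1 : A c d := (List.isChain_cons_cons.mp hc).1
      have := ih (List.isChain_cons_cons.mp hc).2 d b rfl (by simpa using hb)
      simp at ha; subst ha
      exact Relation.ReflTransGen.head h1 this

lemma path_transGen {i j : V} {l : List V} (h : IsPath A i j l) (hne : i ≠ j) :
    Relation.TransGen A i j := by
  have := chain_reflTransGen l h.2.1 i j h.2.2.1 h.2.2.2
  rcases Relation.reflTransGen_iff_eq_or_transGen.mp this with h' | h'
  · exact absurd h'.symm hne
  · exact h'

lemma sched_chain {s : V} {q y : V → ℝ} (hy : Sched A s q y) :
    ∀ l : List V, l.Chain' A → ∀ a b, l.head? = some a → l.getLast? = some b →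
      y a + PathLen q l ≤ y b := by
  intro l
  induction l with
  | nil => intro _ a b h; simp at h
  | cons c l ih =>
    intro hc a b ha hb
    cases l with
    | nil =>
      simp at ha hb; subst ha; rw [hb]; simp [PathLen]
    | cons d l' =>
      have h1 : A c d := (List.isChain_cons_cons.mp hc).1
      have ha' : c = a := by simpa using ha
      subst ha'
      have h2 := ih (List.isChain_cons_cons.mp hc).2 d b rfl (by simpa using hb)
      have h3 : q c ≤ y d - y c := hy.2.2 c d h1
      rw [pathLen_cons q c (List.cons_ne_nil d l')]
      linarith

lemma sched_path {s i j : V} {q y : V → ℝ} {l : List V} (hy : Sched A s q y)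
    (h : IsPath A i j l) : y i + PathLen q l ≤ y j :=
  sched_chain hy l h.2.1 i j h.2.2.1 h.2.2.2

end Aux

/-- validity of formulation (Dom): there is `z ≥ 0` with `z s = 0`,
`z t ≤ M` and `z_j - z_i ≥ L⁰(i,j) + (L^Δ(i,j) - L⁰(i,j))·[j ∈ H]` for all `i ≺ j`
iff `H` is an anchored set. -/
theorem dom_formulation_valid
    {V : Type*} [Fintype V] (A : V → V → Prop) (s t : V)
    (p : V → ℝ) (hp : ∀ v, 0 ≤ p v) (hps : p s = 0)
    (hacyc : ∀ v, ¬ Relation.TransGen A v v)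
    (hsrc : ∀ v, v ≠ s → Relation.TransGen A s v)
    (hsink : ∀ v, v ≠ t → Relation.TransGen A v t)
    (Δ : Set (V → ℝ)) (hΔne : Δ.Nonempty) (hΔnonneg : ∀ δ ∈ Δ, ∀ v, 0 ≤ δ v)
    (hΔst : ∀ δ ∈ Δ, δ s = 0 ∧ δ t = 0)
    (L0 LΔ : V → V → ℝ)
    (hL0 : ∀ i j, Relation.TransGen A i j → IsLongest A p i j (L0 i j))
    (hLΔ : ∀ i j, Relation.TransGen A i j → IsWorst A p Δ i j (LΔ i j))
    (H : Set V) (hHs : s ∉ H) (hHt : t ∉ H) (M : ℝ) :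
    (∃ z : V → ℝ, z s = 0 ∧ (∀ v, 0 ≤ z v) ∧ z t ≤ M ∧
        ∀ i j, Relation.TransGen A i j →
          L0 i j + (LΔ i j - L0 i j) * H.indicator 1 j ≤ z j - z i) ↔
      (∃ x, Sched A s p x ∧ x t ≤ M ∧ XAnchored A s p Δ x H) := by
  classical
  have hnos : ∀ i, ¬ Relation.TransGen A i s := by
    intro i hi
    rcases eq_or_ne i s with rfl | h
    · exact hacyc _ hi
    · exact hacyc s ((hsrc i h).trans hi)
  have hLd_ge : ∀ i j, Relation.TransGen A i j → L0 i j ≤ LΔ i j := by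
    intro i j hij
    obtain ⟨l, hl, hlen⟩ := (hL0 i j hij).1
    obtain ⟨δ0, hδ0⟩ := hΔne
    have h1 : PathLen p l ≤ PathLen (fun v => p v + δ0 v) l :=
      pathLen_mono (fun v => le_add_of_nonneg_right (hΔnonneg δ0 hδ0 v)) l
    have h2 := (hLΔ i j hij).2 ⟨δ0, hδ0, l, hl, rfl⟩
    rw [hlen] at h1
    linarith
  constructor
  · rintro ⟨z, hzs, hznn, hzt, hzc⟩
    have hkey : ∀ i j, Relation.TransGen A i j → j ∈ H → LΔ i j ≤ z j - z i := by
      intro i j hij hj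
      have h1 := hzc i j hij
      have h2 : H.indicator (1 : V → ℝ) j = 1 := by
        rw [Set.indicator_of_mem hj]; rfl
      rw [h2, mul_one] at h1
      linarith
    refine ⟨z, ⟨hzs, hznn, ?_⟩, hzt, ?_⟩
    · intro i j hij
      have h1 := hzc i j (Relation.TransGen.single hij)
      have h2 : 0 ≤ (LΔ i j - L0 i j) * H.indicator 1 j :=
        mul_nonneg (sub_nonneg.2 (hLd_ge i j (.single hij)))
          (Set.indicator_nonneg (fun _ _ => by norm_num) j)
      have h3 : p i ≤ L0 i j :=
        pathLen_pair p i j ▸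
          (hL0 i j (.single hij)).2 ⟨[i, j], isPath_pair hij, rfl⟩
      linarith
    · intro δ hδ
      set q : V → ℝ := fun v => p v + δ v with hqdef
      have hq0 : ∀ v, 0 ≤ q v := fun v => add_nonneg (hp v) (hΔnonneg δ hδ v)
      have hqs : q s = 0 := by simp [hqdef, hps, (hΔst δ hδ).1]
      have hqpath : ∀ i j (l : List V), Relation.TransGen A i j → IsPath A i j l →
          PathLen q l ≤ LΔ i j := fun i j l hij hl => (hLΔ i j hij).2 ⟨δ, hδ, l, hl, rfl⟩
      set S : V → Set ℝ := fun v =>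
        {r | ∃ l, IsPath A s v l ∧ PathLen q l = r} ∪
        {r | ∃ i ∈ H, ∃ l, IsPath A i v l ∧ z i + PathLen q l = r} with hSdef
      have hSmem : ∀ v r, r ∈ S v ↔ ((∃ l, IsPath A s v l ∧ PathLen q l = r) ∨
          (∃ i ∈ H, ∃ l, IsPath A i v l ∧ z i + PathLen q l = r)) := by
        intro v r; rw [hSdef]; simp [Set.mem_union]
      have hSne : ∀ v, v ≠ s → (S v).Nonempty := by
        intro v hv
        obtain ⟨l, hl⟩ := transGen_path (hsrc v hv)
        exact ⟨PathLen q l, (hSmem v _).2 (Or.inl ⟨l, hl, rfl⟩)⟩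
      haveI : Nonempty V := ⟨s⟩
      have hSbdd : ∀ v, v ∉ H → v ≠ s → BddAbove (S v) := by
        intro v hvH hvs
        refine ⟨max (LΔ s v) (Finset.univ.sup' Finset.univ_nonempty
          (fun i => z i + LΔ i v)), ?_⟩
        intro r hr
        rcases (hSmem v r).1 hr with ⟨l, hl, rfl⟩ | ⟨i, hiH, l, hl, rfl⟩
        · exact le_max_of_le_left (hqpath s v l (hsrc v hvs) hl)
        · refine le_max_of_le_right ?_
          have hiv : i ≠ v := fun h => hvH (h ▸ hiH)
          have htg := path_transGen hl hiv
          calc z i + PathLen q l ≤ z i + LΔ i v := by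
                linarith [hqpath i v l htg hl]
            _ ≤ _ := Finset.le_sup' (fun i => z i + LΔ i v) (Finset.mem_univ i)
      set y : V → ℝ := fun v => if v ∈ H then z v else if v = s then 0 else sSup (S v)
        with hydef
      have hyH : ∀ v ∈ H, y v = z v := fun v hv => by simp [hydef, hv]
      have hys : y s = 0 := by simp [hydef, hHs]
      have hyS : ∀ v, v ∉ H → v ≠ s → y v = sSup (S v) := fun v h1 h2 => by
        simp [hydef, h1, h2]
      refine ⟨y, ⟨hys, ?_, ?_⟩, hyH⟩
      · intro v
        by_cases hv : v ∈ H
        · rw [hyH v hv]; exact hznn v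
        · by_cases hvs : v = s
          · subst hvs; rw [hys]
          · rw [hyS v hv hvs]
            obtain ⟨l, hl⟩ := transGen_path (hsrc v hvs)
            calc (0:ℝ) ≤ PathLen q l := pathLen_nonneg hq0 l
              _ ≤ sSup (S v) := le_csSup (hSbdd v hv hvs)
                  ((hSmem v _).2 (Or.inl ⟨l, hl, rfl⟩))
      · intro i j hij
        have hjs : j ≠ s := fun h => hnos i (h ▸ Relation.TransGen.single hij)
        rw [le_sub_iff_add_le, add_comm]
        show y i + q i ≤ y j
        by_cases hjH : j ∈ H
        · rw [hyH j hjH]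
          by_cases hiH : i ∈ H
          · rw [hyH i hiH]
            have h1 := hkey i j (.single hij) hjH
            have h2 := hqpath i j [i, j] (.single hij) (isPath_pair hij)
            rw [pathLen_pair] at h2
            linarith
          · by_cases his : i = s
            · subst his
              rw [hys, hqs]
              linarith [hznn j]
            · rw [hyS i hiH his]
              have hmain : sSup (S i) ≤ z j - q i := by
                apply csSup_le (hSne i his)
                intro r hr
                rcases (hSmem i r).1 hr with ⟨l, hl, rfl⟩ | ⟨k, hkH, l, hl, rfl⟩
                · obtain ⟨hpath, hlen⟩ := isPath_snoc hl hij
                  have htg : Relation.TransGen A s j := hsrc j hjs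
                  have h1 := hqpath s j _ htg hpath
                  rw [hlen q] at h1
                  have h2 := hkey s j htg hjH
                  rw [hzs] at h2
                  linarith
                · obtain ⟨hpath, hlen⟩ := isPath_snoc hl hij
                  have hki : k ≠ i := fun h => hiH (h ▸ hkH)
                  have htgkj : Relation.TransGen A k j :=
                    (path_transGen hl hki).tail hij
                  have h1 := hqpath k j _ htgkj hpath
                  rw [hlen q] at h1
                  have h2 := hkey k j htgkj hjH
                  linarith
              linarith
        · rw [hyS j hjH hjs]
          by_cases hiH : i ∈ H
          · rw [hyH i hiH]
            have hmem : z i + q i ∈ S j := (hSmem j _).2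
              (Or.inr ⟨i, hiH, [i, j], isPath_pair hij, by rw [pathLen_pair]⟩)
            exact le_csSup (hSbdd j hjH hjs) hmem
          · by_cases his : i = s
            · subst his
              rw [hys, hqs]
              have hmem : PathLen q [i, j] ∈ S j := (hSmem j _).2
                (Or.inl ⟨[i, j], isPath_pair hij, rfl⟩)
              have h1 := le_csSup (hSbdd j hjH hjs) hmem
              have h0 := pathLen_nonneg hq0 [i, j]
              linarith
            · rw [hyS i hiH his]
              have hmain : sSup (S i) ≤ sSup (S j) - q i := by
                apply csSup_le (hSne i his)
                intro r hr
                rcases (hSmem i r).1 hr with ⟨l, hl, rfl⟩ | ⟨k, hkH, l, hl, rfl⟩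
                · obtain ⟨hpath, hlen⟩ := isPath_snoc hl hij
                  have hmem : PathLen q (l ++ [j]) ∈ S j :=
                    (hSmem j _).2 (Or.inl ⟨_, hpath, rfl⟩)
                  have h1 := le_csSup (hSbdd j hjH hjs) hmem
                  rw [hlen q] at h1
                  linarith
                · obtain ⟨hpath, hlen⟩ := isPath_snoc hl hij
                  have hmem : z k + PathLen q (l ++ [j]) ∈ S j :=
                    (hSmem j _).2 (Or.inr ⟨k, hkH, _, hpath, rfl⟩)
                  have h1 := le_csSup (hSbdd j hjH hjs) hmem
                  rw [hlen q] at h1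
                  linarith
              linarith
  · rintro ⟨x, hx, hxt, hxanc⟩
    have hL0add : ∀ a b c, Relation.TransGen A a b → Relation.TransGen A b c →
        L0 a b + L0 b c ≤ L0 a c := by
      intro a b c hab hbc
      obtain ⟨l1, hl1, he1⟩ := (hL0 a b hab).1
      obtain ⟨l2, hl2, he2⟩ := (hL0 b c hbc).1
      obtain ⟨hpath, hlen⟩ := isPath_append_s6 hl1 hl2
      have h1 := (hL0 a c (hab.trans hbc)).2 ⟨_, hpath, rfl⟩
      rw [hlen p, he1, he2] at h1
      exact h1
    set T : V → Set ℝ := fun j =>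
      {r | r = L0 s j} ∪ {r | ∃ i ∈ H, Relation.TransGen A i j ∧ r = x i + L0 i j}
      with hTdef
    have hTmem : ∀ j r, r ∈ T j ↔ (r = L0 s j ∨
        ∃ i ∈ H, Relation.TransGen A i j ∧ r = x i + L0 i j) := by
      intro j r; rw [hTdef]; simp [Set.mem_union]
    have hTne : ∀ j, (T j).Nonempty := fun j => ⟨L0 s j, (hTmem j _).2 (Or.inl rfl)⟩
    have hTub : ∀ j, j ≠ s → ∀ r ∈ T j, r ≤ x j := by
      intro j hjs r hr
      rcases (hTmem j r).1 hr with rfl | ⟨i, hiH, hij, rfl⟩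
      · obtain ⟨l, hl, hlen⟩ := (hL0 s j (hsrc j hjs)).1
        have h1 := sched_path hx hl
        rw [hlen, hx.1] at h1
        linarith
      · obtain ⟨l, hl, hlen⟩ := (hL0 i j hij).1
        have h1 := sched_path hx hl
        rw [hlen] at h1
        linarith
    have hTbdd : ∀ j, j ≠ s → BddAbove (T j) := fun j h => ⟨x j, fun r hr => hTub j h r hr⟩
    set z : V → ℝ := fun j => if j ∈ H then x j else if j = s then 0 else sSup (T j)
      with hzdef
    have hzH : ∀ j ∈ H, z j = x j := fun j hj => by simp [hzdef, hj]
    have hzs : z s = 0 := by simp [hzdef, hHs]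
    have hzT : ∀ j, j ∉ H → j ≠ s → z j = sSup (T j) := fun j h1 h2 => by
      simp [hzdef, h1, h2]
    have hzle : ∀ j, z j ≤ x j := by
      intro j
      by_cases hj : j ∈ H
      · rw [hzH j hj]
      · by_cases hjs : j = s
        · subst hjs; rw [hzs, hx.1]
        · rw [hzT j hj hjs]
          exact csSup_le (hTne j) (hTub j hjs)
    have hL0nn : ∀ i j, Relation.TransGen A i j → 0 ≤ L0 i j := by
      intro i j h
      obtain ⟨l, hl, hlen⟩ := (hL0 i j h).1
      rw [← hlen]; exact pathLen_nonneg hp l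
    have hznn : ∀ v, 0 ≤ z v := by
      intro v
      by_cases hv : v ∈ H
      · rw [hzH v hv]; exact hx.2.1 v
      · by_cases hvs : v = s
        · subst hvs; rw [hzs]
        · rw [hzT v hv hvs]
          exact le_trans (hL0nn s v (hsrc v hvs))
            (le_csSup (hTbdd v hvs) ((hTmem v _).2 (Or.inl rfl)))
    refine ⟨z, hzs, hznn, le_trans (hzle t) hxt, ?_⟩
    intro i j hij
    have hjs : j ≠ s := fun h => hnos i (h ▸ hij)
    by_cases hjH : j ∈ H
    · have hind : H.indicator (1 : V → ℝ) j = 1 := by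
        rw [Set.indicator_of_mem hjH]; rfl
      rw [hind, mul_one]
      rw [hzH j hjH]
      obtain ⟨δs, hδs, ls, hls, hlens⟩ := (hLΔ i j hij).1
      obtain ⟨yδ, hyδ, hyδH⟩ := hxanc δs hδs
      have h1 : yδ i + PathLen (fun v => p v + δs v) ls ≤ yδ j := sched_path hyδ hls
      rw [hlens, hyδH j hjH] at h1
      have hmono : ∀ l : List V, PathLen p l ≤ PathLen (fun v => p v + δs v) l :=
        fun l => pathLen_mono (fun v => le_add_of_nonneg_right (hΔnonneg δs hδs v)) l
      have h2 : z i ≤ yδ i := by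
        by_cases hiH : i ∈ H
        · rw [hzH i hiH, hyδH i hiH]
        · by_cases his : i = s
          · subst his; rw [hzs, hyδ.1]
          · rw [hzT i hiH his]
            apply csSup_le (hTne i)
            intro r hr
            rcases (hTmem i r).1 hr with rfl | ⟨k, hkH, hki, rfl⟩
            · obtain ⟨l, hl, hlen⟩ := (hL0 s i (hsrc i his)).1
              have h3 := sched_path hyδ hl
              have h4 := hmono l
              rw [hyδ.1, hlen] at *
              linarith
            · obtain ⟨l, hl, hlen⟩ := (hL0 k i hki).1
              have h3 := sched_path hyδ hl
              have h4 := hmono l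
              rw [hyδH k hkH, hlen] at *
              linarith
      linarith
    · have hind : H.indicator (1 : V → ℝ) j = 0 := Set.indicator_of_notMem hjH 1
      rw [hind, mul_zero, add_zero]
      rw [hzT j hjH hjs]
      by_cases hiH : i ∈ H
      · rw [hzH i hiH]
        have h1 := le_csSup (hTbdd j hjs) ((hTmem j _).2 (Or.inr ⟨i, hiH, hij, rfl⟩))
        linarith
      · by_cases his : i = s
        · subst his; rw [hzs]
          have h1 := le_csSup (hTbdd j hjs) ((hTmem j _).2 (Or.inl rfl))
          linarith
        · rw [hzT i hiH his]
          have hmain : sSup (T i) ≤ sSup (T j) - L0 i j := by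
            apply csSup_le (hTne i)
            intro r hr
            rcases (hTmem i r).1 hr with rfl | ⟨k, hkH, hki, rfl⟩
            · have h1 := hL0add s i j (hsrc i his) hij
              have h2 := le_csSup (hTbdd j hjs) ((hTmem j _).2 (Or.inl rfl))
              linarith
            · have h1 := hL0add k i j hki hij
              have h2 := le_csSup (hTbdd j hjs)
                ((hTmem j _).2 (Or.inr ⟨k, hkH, hki.trans hij, rfl⟩))
              linarith
          linarith
end

section
/- (Valid inequality.) If H ⊆ J is an anchored set for deadline M and uncertainty set Δ, then for every j ∈ H with L^Δ(s,j) > L⁰(s,j) one has M ≥ L⁰(s,j) + (L^Δ(s,j) − L⁰(s,j)) + L⁰(j,t); more generally any schedule z with z_t ≤ M satisfying z_j ≥ L⁰(s,j) + (L^Δ(s,j) − L⁰(s,j)) h_j and z_t − z_j ≥ L⁰(j,t) forces h_j ≤ ⌊(M − L⁰(s,j) − L⁰(j,t)) / (L^Δ(s,j) − L⁰(s,j))⌋ for binary h_j. -/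

lemma sched_pathLen_le {V : Type*} {A : V → V → Prop} {s : V} {q x : V → ℝ}
    (hx : Sched A s q x) :
    ∀ (l : List V) (i j : V), IsPath A i j l → PathLen q l ≤ x j - x i := by
  intro l
  induction l with
  | nil => intro i j h; exact absurd rfl h.1
  | cons a l ih =>
    intro i j h
    obtain ⟨-, hch, hhd, hlast⟩ := h
    have hia : i = a := by simpa using hhd.symm
    subst hia
    cases l with
    | nil =>
      have hji : j = i := by simpa using hlast.symm
      subst hji
      simp [PathLen]
    | cons b l =>
      have hab : A i b := (List.isChain_cons_cons.mp hch).1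
      have hch' : (b :: l).Chain' A := (List.isChain_cons_cons.mp hch).2
      have hlast' : (b :: l).getLast? = some j := by
        simpa [List.getLast?_cons_cons] using hlast
      have hrec : PathLen q (b :: l) ≤ x j - x b :=
        ih b j ⟨by simp, hch', by simp, hlast'⟩
      have hqi : q i ≤ x b - x i := hx.2.2 i b hab
      have : PathLen q (i :: b :: l) = q i + PathLen q (b :: l) := by
        simp [PathLen]
      rw [this]; linarith

/-- valid inequality: if `H` is anchored then every `j ∈ H` with
`L^Δ(s,j) > L⁰(s,j)` satisfies `M ≥ L⁰(s,j) + (L^Δ(s,j) - L⁰(s,j)) + L⁰(j,t)`;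
more generally any schedule-value `z` with the stated constraints forces the floor
bound on a binary `h_j`. -/
theorem dom_valid_inequality
    {V : Type*} [Fintype V] (A : V → V → Prop) (s t : V)
    (p : V → ℝ) (hp : ∀ v, 0 ≤ p v) (hps : p s = 0)
    (hacyc : ∀ v, ¬ Relation.TransGen A v v)
    (hsrc : ∀ v, v ≠ s → Relation.TransGen A s v)
    (hsink : ∀ v, v ≠ t → Relation.TransGen A v t)
    (Δ : Set (V → ℝ)) (hΔne : Δ.Nonempty) (hΔnonneg : ∀ δ ∈ Δ, ∀ v, 0 ≤ δ v)
    (hΔst : ∀ δ ∈ Δ, δ s = 0 ∧ δ t = 0)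
    (L0 LΔ : V → V → ℝ)
    (hL0 : ∀ i j, Relation.TransGen A i j → IsLongest A p i j (L0 i j))
    (hLΔ : ∀ i j, Relation.TransGen A i j → IsWorst A p Δ i j (LΔ i j))
    (M : ℝ) :
    ((∀ H : Set V, s ∉ H → t ∉ H →
        (∃ x, Sched A s p x ∧ x t ≤ M ∧ XAnchored A s p Δ x H) →
        ∀ j ∈ H, L0 s j < LΔ s j →
          L0 s j + (LΔ s j - L0 s j) + L0 j t ≤ M) ∧
      (∀ (z : V → ℝ) (j : V) (hj : ℝ), j ≠ s → j ≠ t →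
        (hj = 0 ∨ hj = 1) → L0 s j < LΔ s j →
        z t ≤ M → L0 s j + (LΔ s j - L0 s j) * hj ≤ z j → L0 j t ≤ z t - z j →
        hj ≤ (⌊(M - (L0 s j + L0 j t)) / (LΔ s j - L0 s j)⌋ : ℝ))) := by
  have hden : ∀ a b : ℝ, a < b → (0:ℝ) < b - a := fun a b h => by linarith
  constructor
  · intro H hsH htH ⟨x, hx, hxt, hanc⟩ j hjH hlt
    have hjs : j ≠ s := fun h => hsH (h ▸ hjH)
    have hjt : j ≠ t := fun h => htH (h ▸ hjH)
    have hLΔmem := (hLΔ s j (hsrc j hjs)).1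
    obtain ⟨δ, hδΔ, l0, hl0, hl0len⟩ := hLΔmem
    obtain ⟨y, hy, hyH⟩ := hanc δ hδΔ
    have hxj : LΔ s j ≤ x j := by
      have := sched_pathLen_le hy l0 s j hl0
      rw [hl0len, hy.1] at this
      have := hyH j hjH
      linarith
    have hL0mem := (hL0 j t (hsink j hjt)).1
    obtain ⟨l1, hl1, hl1len⟩ := hL0mem
    have hjt2 : L0 j t ≤ x t - x j := by
      have := sched_pathLen_le hx l1 j t hl1
      linarith
    linarith
  · intro z j hj hjs hjt hbin hlt hzt hzj hzjt
    have hpos : (0:ℝ) < LΔ s j - L0 s j := by linarith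
    rcases hbin with h0 | h1
    · subst h0
      have hnum : 0 ≤ M - (L0 s j + L0 j t) := by
        rw [mul_zero, add_zero] at hzj; linarith
      have : (0:ℤ) ≤ ⌊(M - (L0 s j + L0 j t)) / (LΔ s j - L0 s j)⌋ := by
        apply Int.le_floor.mpr
        push_cast
        exact div_nonneg hnum hpos.le
      exact_mod_cast this
    · subst h1
      have hnum : LΔ s j - L0 s j ≤ M - (L0 s j + L0 j t) := by
        rw [mul_one] at hzj; linarith
      have : (1:ℤ) ≤ ⌊(M - (L0 s j + L0 j t)) / (LΔ s j - L0 s j)⌋ := by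
        apply Int.le_floor.mpr
        push_cast
        rw [le_div_iff₀ hpos, one_mul]
        exact hnum
      exact_mod_cast this
end

section
/- (Dom stronger than Lay.) Suppose for all i ≺ j the instance satisfies D_j := L_{G(p+d̂)}(s,j) − L⁰(s,j) ≥ L^Δ(i,j) − L⁰(i,j). Then for every h ∈ [0,1]^J and every i ≺ j, L^Δ(i,j) − D_j(1 − h_j) ≤ L⁰(i,j) + (L^Δ(i,j) − L⁰(i,j)) h_j, and consequently every chain inequality Σ_{(i,j)∈C, j≠t}(L⁰(i,j) + (L^Δ(i,j) − L⁰(i,j))h_j) + L⁰(j_C,t) ≤ M implies Σ_{(i,j)∈C, j≠t}(L^Δ(i,j) − D_j(1−h_j)) + L⁰(j_C,t) ≤ M; hence Proj_h(P_Dom) ⊆ Proj_h(P_Lay). -/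

lemma lenW_mono {V : Type*} {R : V → V → Prop} {w w' : V → V → ℝ}
    (hw : ∀ a b, R a b → w a b ≤ w' a b) :
    ∀ l : List V, l.Chain' R → LenW w l ≤ LenW w' l
  | [], _ => le_refl _
  | [_], _ => le_refl _
  | a :: b :: l, hc => by
    replace hc := List.isChain_cons_cons.mp hc
    exact add_le_add (hw a b hc.1) (lenW_mono hw (b :: l) hc.2)

/-- if `D_j := L_{G(p+d̂)}(s,j) − L⁰(s,j) ≥ L^Δ(i,j) − L⁰(i,j)` for all
`i ≺ j`, then the (Dom) arc coefficients dominate the (Lay) ones for every `h ∈ [0,1]^J`,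
and every chain inequality of (Dom) implies the corresponding chain inequality of (Lay);
hence `Proj_h(P_Dom) ⊆ Proj_h(P_Lay)`. -/
theorem dom_stronger_than_lay
    {V : Type*} [Fintype V] [DecidableEq V] (A : V → V → Prop) (s t : V)
    (p dhat : V → ℝ) (hp : ∀ v, 0 ≤ p v) (hdhat : ∀ v, 0 ≤ dhat v)
    (hps : p s = 0) (hds : dhat s = 0) (hdt : dhat t = 0)
    (Γ : ℕ) (hΓ : 1 ≤ Γ)
    (hacyc : ∀ v, ¬ Relation.TransGen A v v)
    (hsrc : ∀ v, v ≠ s → Relation.TransGen A s v)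
    (hsink : ∀ v, v ≠ t → Relation.TransGen A v t)
    (Δ : Set (V → ℝ))
    (hΔ : Δ = {δ | ∃ u : V → ℝ, (∀ v, 0 ≤ u v ∧ u v ≤ 1) ∧ (∑ v, u v) ≤ (Γ : ℝ) ∧
                  u s = 0 ∧ u t = 0 ∧ δ = fun v => dhat v * u v})
    (L0 LΔ : V → V → ℝ) (Ldhat : V → ℝ)
    (hL0 : ∀ i j, Relation.TransGen A i j → IsLongest A p i j (L0 i j))
    (hLΔ : ∀ i j, Relation.TransGen A i j → IsWorst A p Δ i j (LΔ i j))
    (hLdhat : ∀ j, IsLongest A (fun v => p v + dhat v) s j (Ldhat j))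
    (hcond : ∀ i j, Relation.TransGen A i j → LΔ i j - L0 i j ≤ Ldhat j - L0 s j)
    (M : ℝ) :
    (∀ h : V → ℝ, (∀ v, 0 ≤ h v ∧ h v ≤ 1) →
        ∀ i j, Relation.TransGen A i j →
          LΔ i j - (Ldhat j - L0 s j) * (1 - h j) ≤
            L0 i j + (LΔ i j - L0 i j) * h j) ∧
    (∀ h : V → ℝ, (∀ v, 0 ≤ h v ∧ h v ≤ 1) →
      (∀ C : List V, IsPath (fun a b => Relation.TransGen A a b) s t C →
          LenW (fun i j => if j = t then L0 i t
            else L0 i j + (LΔ i j - L0 i j) * h j) C ≤ M) →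
      (∀ C : List V, IsPath (fun a b => Relation.TransGen A a b) s t C →
          LenW (fun i j => if j = t then L0 i t
            else LΔ i j - (Ldhat j - L0 s j) * (1 - h j)) C ≤ M)) := by
  have key : ∀ h : V → ℝ, (∀ v, 0 ≤ h v ∧ h v ≤ 1) →
      ∀ i j, Relation.TransGen A i j →
        LΔ i j - (Ldhat j - L0 s j) * (1 - h j) ≤ L0 i j + (LΔ i j - L0 i j) * h j := by
    intro h hh i j hij
    have h1 := hcond i j hij
    have h2 := (hh j).1
    have h3 := (hh j).2
    nlinarith
  refine ⟨key, ?_⟩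
  intro h hh hdom C hC
  refine le_trans ?_ (hdom C hC)
  apply lenW_mono ?_ C hC.2.1
  intro a b hab
  by_cases hb : b = t
  · simp [hb]
  · simpa [hb] using key h hh a b hab
end

section
/- (Integrality for unitary AnchRob.) Let (J∪{s,t}, ≺) be a finite poset with least element s and greatest element t, and let M be a nonnegative integer. Then the polytope P of pairs (z, h) ∈ ℝ^{J∪{s,t}} × ℝ^J satisfying z_i − z_s ≥ 0 and z_t − z_i ≥ 0 for all i ∈ J, z_t ≤ M, z_j − z_i ≥ h_j for all i, j ∈ J with i ≺ j, z ≥ 0, and 0 ≤ h_j ≤ 1 for all j ∈ J, has only integer extreme points. -/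
/-- integrality for the unitary Anchor-Robust problem: the polytope of
pairs `(z,h)` satisfying `z_i ≥ z_s`, `z_t ≥ z_i` (i ∈ J), `z_t ≤ M`,
`z_j − z_i ≥ h_j` for `i ≺ j` in `J`, `z ≥ 0` and `0 ≤ h ≤ 1`, over a finite poset
with least element `s`, greatest element `t` and integer deadline `M`, has only
integer extreme points. -/
theorem unitary_anchrob_polytope_integral
    {V : Type*} [Fintype V] [PartialOrder V] (s t : V)
    (hs : ∀ v, s ≤ v) (ht : ∀ v, v ≤ t) (M : ℕ)
    (P : Set ((V → ℝ) × (V → ℝ)))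
    (hP : P = {zh | (∀ i, i ≠ s → i ≠ t → zh.1 s ≤ zh.1 i ∧ zh.1 i ≤ zh.1 t) ∧
        zh.1 t ≤ (M : ℝ) ∧
        (∀ i j, i ≠ s → i ≠ t → j ≠ s → j ≠ t → i < j → zh.2 j ≤ zh.1 j - zh.1 i) ∧
        (∀ v, 0 ≤ zh.1 v) ∧
        (∀ j, 0 ≤ zh.2 j ∧ zh.2 j ≤ 1) ∧ zh.2 s = 0 ∧ zh.2 t = 0}) :
    ∀ zh ∈ Set.extremePoints ℝ P,
      (∀ v, ∃ n : ℤ, zh.1 v = (n : ℝ)) ∧ (∀ v, ∃ n : ℤ, zh.2 v = (n : ℝ)) := by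
  classical
  rintro ⟨z, h⟩ hzh
  rw [mem_extremePoints] at hzh
  obtain ⟨hmemP0, hext⟩ := hzh
  have hmem := hmemP0
  rw [hP] at hmem
  obtain ⟨hA, hB, hC, hD, hE, hF, hG⟩ := hmem
  dsimp only at hA hB hC hD hE hF hG
  -- auxiliary variables
  set x2 : V → ℝ := fun v => 1 + z v - h v with hx2def
  by_cases hall : ∀ v, Int.fract (z v) = 0 ∧ Int.fract (x2 v) = 0
  · constructor
    · intro v
      refine ⟨⌊z v⌋, ?_⟩
      have h1 := (hall v).1
      rw [← Int.self_sub_floor] at h1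
      linarith
    · intro v
      have h1 := (hall v).1
      have h2 := (hall v).2
      rw [← Int.self_sub_floor] at h1 h2
      refine ⟨1 + ⌊z v⌋ - ⌊x2 v⌋, ?_⟩
      have hxv : x2 v = 1 + z v - h v := by rw [hx2def]
      push_cast
      linarith
  · exfalso
    push_neg at hall
    have hθex : ∃ θ : ℝ, θ ≠ 0 ∧
        ((∃ w, Int.fract (z w) = θ) ∨ (∃ w, Int.fract (x2 w) = θ)) := by
      obtain ⟨v, hv⟩ := hall
      by_cases h1 : Int.fract (z v) = 0
      · exact ⟨Int.fract (x2 v), hv h1, Or.inr ⟨v, rfl⟩⟩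
      · exact ⟨Int.fract (z v), h1, Or.inl ⟨v, rfl⟩⟩
    obtain ⟨θ, hθ0, hwit⟩ := hθex
    -- perturbation direction indicator
    set d : ℝ → ℝ := fun a => if Int.fract a = θ then 1 else 0 with hd
    have dcases : ∀ a : ℝ, d a = 0 ∨ d a = 1 := by
      intro a; rw [hd]; simp only; split <;> simp
    have dkey : ∀ a b : ℝ, d a ≠ d b → ∀ n : ℤ, a - b ≠ (n : ℝ) := by
      intro a b hab n he
      apply hab
      have : Int.fract a = Int.fract b := Int.fract_eq_fract.mpr ⟨n, he⟩
      rw [hd]; simp only [this]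
    have dint : ∀ m : ℤ, d ((m : ℤ) : ℝ) = 0 := by
      intro m; rw [hd]; simp only [Int.fract_intCast]
      exact if_neg (fun e => hθ0 e.symm)
    -- the finite set of slack values
    set S : Finset ℝ :=
      ((Finset.univ.image fun i => z i - z s) ∪
      (Finset.univ.image fun i => z t - z i) ∪
      {(M : ℝ) - z t} ∪
      ((Finset.univ ×ˢ Finset.univ).image fun p : V × V => z p.2 - z p.1 - h p.2) ∪
      (Finset.univ.image z) ∪
      (Finset.univ.image h) ∪
      (Finset.univ.image fun j => 1 - h j)) with hSdef
    set Spos : Finset ℝ := insert (1 : ℝ) (S.filter fun a => 0 < a) with hSposdef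
    have hSposne : Spos.Nonempty := ⟨1, Finset.mem_insert_self _ _⟩
    set ε : ℝ := Spos.min' hSposne / 2 with hεdef
    have hSpospos : ∀ a ∈ Spos, 0 < a := by
      intro a ha
      rw [hSposdef, Finset.mem_insert] at ha
      rcases ha with ha | ha
      · rw [ha]; norm_num
      · exact (Finset.mem_filter.mp ha).2
    have hεpos : 0 < ε := by
      have := hSpospos _ (Spos.min'_mem hSposne)
      rw [hεdef]
      linarith
    have hεle : ∀ a ∈ S, 0 < a → 2 * ε ≤ a := by
      intro a ha hapos
      have : Spos.min' hSposne ≤ a :=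
        Finset.min'_le _ _ (by
          rw [hSposdef]
          exact Finset.mem_insert_of_mem (Finset.mem_filter.mpr ⟨ha, hapos⟩))
      have h2 : 2 * ε = Spos.min' hSposne := by rw [hεdef]; ring
      linarith
    -- key perturbation lemma
    have key : ∀ σ e : ℝ, σ ∈ S → 0 ≤ σ → |e| ≤ 1 →
        (e ≠ 0 → ∀ n : ℤ, σ ≠ (n : ℝ)) → 0 ≤ σ + ε * e := by
      intro σ e hσS hσ0 heabs hne
      by_cases he0 : e = 0
      · rw [he0]; linarith
      · have hσpos : 0 < σ :=
          lt_of_le_of_ne hσ0 (fun e' => hne he0 0 (by rw [← e']; norm_num))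
        have h2 : 2 * ε ≤ σ := hεle σ hσS hσpos
        have h3 : -1 ≤ e := (abs_le.mp heabs).1
        nlinarith
    -- S membership lemmas
    have memS1 : ∀ i : V, z i - z s ∈ S := by
      intro i
      rw [hSdef]
      exact Finset.mem_union_left _ (Finset.mem_union_left _ (Finset.mem_union_left _
        (Finset.mem_union_left _ (Finset.mem_union_left _ (Finset.mem_union_left _
        (Finset.mem_image_of_mem _ (Finset.mem_univ i)))))))
    have memS2 : ∀ i : V, z t - z i ∈ S := by
      intro i
      rw [hSdef]
      exact Finset.mem_union_left _ (Finset.mem_union_left _ (Finset.mem_union_left _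
        (Finset.mem_union_left _ (Finset.mem_union_left _ (Finset.mem_union_right _
        (Finset.mem_image_of_mem _ (Finset.mem_univ i)))))))
    have memS3 : (M : ℝ) - z t ∈ S := by
      rw [hSdef]
      exact Finset.mem_union_left _ (Finset.mem_union_left _ (Finset.mem_union_left _
        (Finset.mem_union_left _ (Finset.mem_union_right _
        (Finset.mem_singleton_self _)))))
    have memS4 : ∀ i j : V, z j - z i - h j ∈ S := by
      intro i j
      rw [hSdef]
      have hij : ((i, j) : V × V) ∈ Finset.univ ×ˢ Finset.univ :=
        Finset.mem_product.mpr ⟨Finset.mem_univ i, Finset.mem_univ j⟩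
      exact Finset.mem_union_left _ (Finset.mem_union_left _ (Finset.mem_union_left _
        (Finset.mem_union_right _
        (Finset.mem_image_of_mem (fun p : V × V => z p.2 - z p.1 - h p.2) hij))))
    have memS5 : ∀ v : V, z v ∈ S := by
      intro v
      rw [hSdef]
      exact Finset.mem_union_left _ (Finset.mem_union_left _ (Finset.mem_union_right _
        (Finset.mem_image_of_mem _ (Finset.mem_univ v))))
    have memS6 : ∀ v : V, h v ∈ S := by
      intro v
      rw [hSdef]
      exact Finset.mem_union_left _ (Finset.mem_union_right _
        (Finset.mem_image_of_mem _ (Finset.mem_univ v)))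
    have memS7 : ∀ v : V, 1 - h v ∈ S := by
      intro v
      rw [hSdef]
      exact Finset.mem_union_right _ (Finset.mem_image_of_mem _ (Finset.mem_univ v))
    -- abs bound helper
    have habs : ∀ sg a b : ℝ, |sg| = 1 → (a = 0 ∨ a = 1) → (b = 0 ∨ b = 1) →
        |sg * (a - b)| ≤ 1 := by
      intro sg a b hsg ha hb
      rw [abs_mul, hsg, one_mul]
      rcases ha with ha | ha <;> rcases hb with hb | hb <;> rw [ha, hb] <;> norm_num
    -- d values at special points
    have hdxs : d (x2 s) = d (z s) := by
      have : Int.fract (x2 s) = Int.fract (z s) :=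
        Int.fract_eq_fract.mpr ⟨1, by
          show (1 + z s - h s) - z s = ((1 : ℤ) : ℝ)
          rw [hF]; push_cast; ring⟩
      rw [hd]; simp only [this]
    have hdxt : d (x2 t) = d (z t) := by
      have : Int.fract (x2 t) = Int.fract (z t) :=
        Int.fract_eq_fract.mpr ⟨1, by
          show (1 + z t - h t) - z t = ((1 : ℤ) : ℝ)
          rw [hG]; push_cast; ring⟩
      rw [hd]; simp only [this]
    -- membership of perturbed points
    have hmemP : ∀ sg : ℝ, |sg| = 1 →
        ((fun v => z v + ε * (sg * d (z v)),
          fun v => h v + ε * (sg * (d (z v) - d (x2 v)))) : (V → ℝ) × (V → ℝ)) ∈ P := by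
      intro sg hsg
      have hsgne : sg ≠ 0 := by
        intro e; rw [e] at hsg; simp at hsg
      rw [hP]
      refine ⟨?_, ?_, ?_, ?_, ?_, ?_, ?_⟩
      · intro i his hit
        constructor
        · have hk := key (z i - z s) (sg * (d (z i) - d (z s))) (memS1 i)
            (by linarith [(hA i his hit).1])
            (habs sg _ _ hsg (dcases _) (dcases _))
            (by
              intro hne n
              have hdd : d (z i) ≠ d (z s) := by
                intro e; exact hne (by rw [e]; ring)
              exact dkey _ _ hdd n)
          have hr : (z i - z s) + ε * (sg * (d (z i) - d (z s)))
              = (z i + ε * (sg * d (z i))) - (z s + ε * (sg * d (z s))) := by ring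
          simp only [Prod.fst]
          linarith [hk, hr ▸ hk]
        · have hk := key (z t - z i) (sg * (d (z t) - d (z i))) (memS2 i)
            (by linarith [(hA i his hit).2])
            (habs sg _ _ hsg (dcases _) (dcases _))
            (by
              intro hne n
              have hdd : d (z t) ≠ d (z i) := by
                intro e; exact hne (by rw [e]; ring)
              exact dkey _ _ hdd n)
          have hr : (z t - z i) + ε * (sg * (d (z t) - d (z i)))
              = (z t + ε * (sg * d (z t))) - (z i + ε * (sg * d (z i))) := by ring
          simp only [Prod.fst]
          linarith [hr ▸ hk]
      · have hk := key ((M : ℝ) - z t) (sg * (0 - d (z t))) memS3 (by linarith)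
          (habs sg _ _ hsg (Or.inl rfl) (dcases _))
          (by
            intro hne n hMn
            have hdd : d (z t) ≠ d (((M : ℤ) : ℤ) : ℝ) := by
              rw [dint]
              intro e
              exact hne (by rw [e]; ring)
            exact dkey _ _ hdd (-n) (by push_cast; linarith))
        have hr : ((M : ℝ) - z t) + ε * (sg * (0 - d (z t)))
            = (M : ℝ) - (z t + ε * (sg * d (z t))) := by ring
        simp only [Prod.fst]
        linarith [hr ▸ hk]
      · intro i j his hit hjs hjt hij
        have hslack : 0 ≤ z j - z i - h j := by linarith [hC i j his hit hjs hjt hij]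
        have hk := key (z j - z i - h j) (sg * (d (x2 j) - d (z i))) (memS4 i j) hslack
          (habs sg _ _ hsg (dcases _) (dcases _))
          (by
            intro hne n hn
            have hdd : d (x2 j) ≠ d (z i) := by
              intro e; exact hne (by rw [e]; ring)
            refine dkey _ _ hdd (n + 1) ?_
            have hxj : x2 j = 1 + z j - h j := by rw [hx2def]
            push_cast
            linarith)
        have hxj : x2 j = 1 + z j - h j := by rw [hx2def]
        have hr : (z j - z i - h j) + ε * (sg * (d (x2 j) - d (z i)))
            = (z j + ε * (sg * d (z j))) - (z i + ε * (sg * d (z i)))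
              - (h j + ε * (sg * (d (z j) - d (x2 j)))) := by ring
        simp only [Prod.fst, Prod.snd]
        linarith [hr ▸ hk]
      · intro v
        have hk := key (z v) (sg * (d (z v) - 0)) (memS5 v) (hD v)
          (habs sg _ _ hsg (dcases _) (Or.inl rfl))
          (by
            intro hne n hn
            have hdd : d (z v) ≠ d (((0 : ℤ) : ℤ) : ℝ) := by
              rw [dint]
              intro e
              exact hne (by rw [e]; ring)
            exact dkey _ _ hdd n (by push_cast; linarith))
        have hr : z v + ε * (sg * (d (z v) - 0)) = z v + ε * (sg * d (z v)) := by ring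
        simp only [Prod.fst]
        linarith [hr ▸ hk]
      · intro j
        constructor
        · have hk := key (h j) (sg * (d (z j) - d (x2 j))) (memS6 j) (hE j).1
            (habs sg _ _ hsg (dcases _) (dcases _))
            (by
              intro hne n hn
              have hdd : d (z j) ≠ d (x2 j) := by
                intro e; exact hne (by rw [e]; ring)
              refine dkey _ _ hdd (n - 1) ?_
              have hxj : x2 j = 1 + z j - h j := by rw [hx2def]
              push_cast
              linarith)
          simp only [Prod.snd]
          linarith [hk]
        · have hk := key (1 - h j) (sg * (d (x2 j) - d (z j))) (memS7 j) (by linarith [(hE j).2])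
            (habs sg _ _ hsg (dcases _) (dcases _))
            (by
              intro hne n hn
              have hdd : d (x2 j) ≠ d (z j) := by
                intro e; exact hne (by rw [e]; ring)
              refine dkey _ _ hdd n ?_
              have hxj : x2 j = 1 + z j - h j := by rw [hx2def]
              push_cast
              linarith)
          have hr : (1 - h j) + ε * (sg * (d (x2 j) - d (z j)))
              = 1 - (h j + ε * (sg * (d (z j) - d (x2 j)))) := by ring
          simp only [Prod.snd]
          linarith [hr ▸ hk]
      · show h s + ε * (sg * (d (z s) - d (x2 s))) = 0
        rw [hdxs, hF]
        ring
      · show h t + ε * (sg * (d (z t) - d (x2 t))) = 0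
        rw [hdxt, hG]
        ring
    -- derive contradiction with extremality
    have hm1 := hmemP 1 (by norm_num)
    have hm2 := hmemP (-1) (by norm_num)
    have hseg : ((z, h) : (V → ℝ) × (V → ℝ)) ∈ openSegment ℝ
        ((fun v => z v + ε * (1 * d (z v)),
          fun v => h v + ε * (1 * (d (z v) - d (x2 v)))) : (V → ℝ) × (V → ℝ))
        ((fun v => z v + ε * ((-1) * d (z v)),
          fun v => h v + ε * ((-1) * (d (z v) - d (x2 v)))) : (V → ℝ) × (V → ℝ)) := by
      refine ⟨1/2, 1/2, by norm_num, by norm_num, by norm_num, ?_⟩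
      apply Prod.ext
      · funext v
        simp only [Prod.smul_mk, Prod.fst_add, Prod.fst, Pi.add_apply, Pi.smul_apply,
          smul_eq_mul]
        ring
      · funext v
        simp only [Prod.smul_mk, Prod.snd_add, Prod.snd, Pi.add_apply, Pi.smul_apply,
          smul_eq_mul]
        ring
    obtain ⟨hp1, -⟩ := hext _ hm1 _ hm2 hseg
    rw [Prod.ext_iff] at hp1
    have hz0 : ∀ v, d (z v) = 0 := by
      intro v
      have this : z v + ε * (1 * d (z v)) = z v := congrFun hp1.1 v
      have h0 : ε * (1 * d (z v)) = 0 := by linarith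
      have := mul_eq_zero.mp h0
      rcases this with h' | h'
      · exact absurd h' (ne_of_gt hεpos)
      · linarith [h']
    have hx0 : ∀ v, d (x2 v) = 0 := by
      intro v
      have this : h v + ε * (1 * (d (z v) - d (x2 v))) = h v := congrFun hp1.2 v
      have h0 : ε * (1 * (d (z v) - d (x2 v))) = 0 := by linarith
      have := mul_eq_zero.mp h0
      rcases this with h' | h'
      · exact absurd h' (ne_of_gt hεpos)
      · have := hz0 v; linarith [h']
    rcases hwit with ⟨w, hw⟩ | ⟨w, hw⟩
    · have : d (z w) = 1 := by rw [hd]; simp [hw]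
      rw [hz0 w] at this
      norm_num at this
    · have : d (x2 w) = 1 := by rw [hd]; simp [hw]
      rw [hx0 w] at this
      norm_num at this
end

section
/- (Reduction from critical graphs to the unitary case.) Suppose G(p) is critical and Δ is a 1-disruption uncertainty set with deviation d̂₀ > 0, and M = L⁰(s,t) + d̂₀ M' with M' a nonnegative integer. Let z* be the earliest nominal schedule, z*_i = L⁰(s,i). Then for all i ≺ j, L⁰(i,j) = z*_j − z*_i and L^Δ(i,j) = z*_j − z*_i + d̂₀ for i,j with relevant predecessors; consequently (z,h) satisfies the (Dom) constraints for the instance (G(p), M, Δ) if and only if ((z − z*)/d̂₀, h) satisfies the (Dom) constraints for the unitary instance (G, 0, unit deviation, M'), and the polytope of the linear relaxation of (Dom) has integer h-components at all extreme points. -/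
namespace CritAux
variable {V : Type*} {A : V → V → Prop}

lemma map_add_sum (p δ : V → ℝ) (l : List V) :
    (l.map (fun v => p v + δ v)).sum = (l.map p).sum + (l.map δ).sum := by
  induction l with
  | nil => simp
  | cons a l ih => simp [ih]; ring

lemma isPath_single (i : V) : IsPath A i i [i] := by
  refine ⟨by simp, by simp [List.Chain', List.isChain_singleton], rfl, rfl⟩

lemma pathLen_nonneg {q : V → ℝ} (hq : ∀ v, 0 ≤ q v) (l : List V) : 0 ≤ PathLen q l := by
  unfold PathLen
  apply List.sum_nonneg
  intro x hx
  obtain ⟨v, _, rfl⟩ := List.mem_map.1 hx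
  exact hq v

lemma chain'_getLast?_transGen : ∀ (l : List V) (a b : V), List.Chain' A (a :: l) →
    (a :: l).getLast? = some b → a = b ∨ Relation.TransGen A a b := by
  intro l
  induction l with
  | nil => intro a b _ h; simp at h; exact Or.inl h
  | cons c l ih =>
    intro a b hch hl
    rw [List.Chain', List.isChain_cons_cons] at hch
    have : (c :: l).getLast? = some b := by
      simpa using hl
    rcases ih c b hch.2 this with rfl | htg
    · exact Or.inr (Relation.TransGen.single hch.1)
    · exact Or.inr (Relation.TransGen.head hch.1 htg)

lemma isPath_transGen {i j : V} {l : List V} (h : IsPath A i j l) :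
    i = j ∨ Relation.TransGen A i j := by
  obtain ⟨hne, hch, hh, hl⟩ := h
  cases l with
  | nil => exact absurd rfl hne
  | cons a l' =>
    simp at hh; subst hh
    exact chain'_getLast?_transGen l' a j hch hl

lemma transGen_isPath {i j : V} (h : Relation.TransGen A i j) : ∃ l, IsPath A i j l := by
  induction h with
  | @single b hab => exact ⟨[i, b], by simp, by simp [List.Chain', List.isChain_cons_cons, hab, List.isChain_singleton], rfl, rfl⟩
  | @tail b c hab hbc ih =>
    obtain ⟨l, hne, hch, hh, hl⟩ := ih
    refine ⟨l ++ [c], by simp, ?_, ?_, by simp [List.getLast?_concat]⟩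
    · rw [List.Chain', List.isChain_append]
      refine ⟨hch, by simp [List.isChain_singleton], ?_⟩
      intro x hx y hy
      simp at hy
      rw [hl] at hx; simp at hx
      subst hx; subst hy; exact hbc
    · rw [List.head?_append, hh]; rfl

lemma chain'_mem_transGen : ∀ (l : List V) (a b : V), List.Chain' A (a :: l) →
    b ∈ l → Relation.TransGen A a b := by
  intro l
  induction l with
  | nil => intro a b _ h; simp at h
  | cons c l ih =>
    intro a b hch hb
    rw [List.Chain', List.isChain_cons_cons] at hch
    rcases List.mem_cons.1 hb with rfl | hb
    · exact Relation.TransGen.single hch.1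
    · exact Relation.TransGen.head hch.1 (ih c b hch.2 hb)

lemma chain'_nodup (hacyc : ∀ v, ¬ Relation.TransGen A v v) :
    ∀ (l : List V), List.Chain' A l → l.Nodup := by
  intro l
  induction l with
  | nil => simp
  | cons a l ih =>
    intro hch
    refine List.nodup_cons.2 ⟨?_, ih hch.tail⟩
    intro ha
    exact hacyc a (chain'_mem_transGen l a a hch ha)

lemma isPath_append {q : V → ℝ} {i j k : V} {l m : List V}
    (h1 : IsPath A i j l) (h2 : IsPath A j k m) :
    IsPath A i k (l ++ m.tail) ∧ PathLen q (l ++ m.tail) = PathLen q l + PathLen q m := by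
  obtain ⟨hne1, hch1, hh1, hl1⟩ := h1
  obtain ⟨hne2, hch2, hh2, hl2⟩ := h2
  cases m with
  | nil => exact absurd rfl hne2
  | cons b m' =>
    obtain rfl : b = j := by simpa using hh2
    simp only [List.tail_cons]
    have hgl : l.getLast hne1 = b := by
      have := List.getLast?_eq_getLast hne1
      rw [hl1] at this; exact (Option.some_injective _ this.symm)
    have hlsum : (l.map q).sum = PathLen q l + q b := by
      conv_lhs => rw [← List.dropLast_append_getLast hne1]
      rw [hgl]
      simp [PathLen]
    constructor
    · refine ⟨by simp [hne1], ?_, ?_, ?_⟩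
      · rw [List.Chain', List.isChain_append]
        refine ⟨hch1, hch2.tail, ?_⟩
        intro x hx y hy
        rw [hl1] at hx; simp at hx; subst hx
        cases m' with
        | nil => simp at hy
        | cons c m'' =>
          simp at hy; subst hy
          exact (List.isChain_cons_cons.1 hch2).1
      · rw [List.head?_append, hh1]; rfl
      · rw [List.getLast?_append]
        cases m' with
        | nil =>
          simp at hl2 ⊢
          rw [hl1, hl2]
        | cons c m'' =>
          have : (c :: m'').getLast? = some k := by simpa using hl2
          rw [this]; rfl
    · cases m' with
      | nil =>
        simp at hl2; subst hl2
        simp [PathLen]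
      | cons c m'' =>
        rw [PathLen, List.dropLast_append_of_ne_nil (by simp)]
        rw [List.map_append, List.sum_append, ← PathLen, hlsum, PathLen]
        rw [show PathLen q (b :: c :: m'') = q b + PathLen q (c :: m'') from by simp [PathLen]]
        ring

lemma chain'_two_transGen {a c b : V} {r : List V} (h : List.Chain' A (a :: c :: r))
    (hb : (a :: c :: r).getLast? = some b) : Relation.TransGen A a b := by
  have h1 := List.isChain_cons_cons.1 h
  have h2 : (c :: r).getLast? = some b := by simpa using hb
  rcases chain'_getLast?_transGen r c b h1.2 h2 with rfl | htg
  · exact Relation.TransGen.single h1.1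
  · exact Relation.TransGen.head h1.1 htg

lemma head_mem_dropLast {i j : V} {l : List V} (h : IsPath A i j l) (hij : i ≠ j) :
    i ∈ l.dropLast := by
  obtain ⟨hne, hch, hh, hlast⟩ := h
  cases l with
  | nil => exact absurd rfl hne
  | cons a l' =>
    obtain rfl : a = i := by simpa using hh
    cases l' with
    | nil => simp at hlast; exact absurd hlast hij
    | cons c r => simp

lemma map_mul_sum (c : ℝ) (u : V → ℝ) (l : List V) :
    (l.map (fun v => c * u v)).sum = c * (l.map u).sum := by
  induction l with
  | nil => simp
  | cons a l ih => simp [ih]; ring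

lemma pathLen_pert (p u : V → ℝ) (c : ℝ) (l : List V) :
    PathLen (fun v => p v + c * u v) l = PathLen p l + c * ((l.dropLast.map u).sum) := by
  unfold PathLen
  rw [map_add_sum p (fun v => c * u v) l.dropLast, map_mul_sum c u l.dropLast]

end CritAux


set_option maxHeartbeats 1000000 in
/-- reduction from critical precedence graphs under 1-disruption
uncertainty to the unitary case: with `z*_i = L⁰(s,i)`, the longest-path coefficients
split as stated, the (Dom) constraints for `(G(p), M, Δ)` with `M = L⁰(s,t) + d̂₀ M'`
are equivalent to the unitary (Dom) constraints for `((z − z*)/d̂₀, h)` with deadline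
`M'`, and every extreme point of the linear relaxation of (Dom) has integer
`h`-components. -/
theorem critical_one_disruption_reduction
    {V : Type*} [Fintype V] (A : V → V → Prop) (s t : V)
    (p : V → ℝ) (hp : ∀ v, 0 ≤ p v) (hps : p s = 0)
    (hacyc : ∀ v, ¬ Relation.TransGen A v v)
    (hsrc : ∀ v, v ≠ s → Relation.TransGen A s v)
    (hsink : ∀ v, v ≠ t → Relation.TransGen A v t)
    (hnos : ∀ i, ¬ A i s) (hnot : ∀ i, ¬ A t i)
    (dhat0 : ℝ) (hd0 : 0 < dhat0)
    (Δ : Set (V → ℝ))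
    (hΔ : Δ = {δ | ∃ u : V → ℝ, (∀ v, 0 ≤ u v ∧ u v ≤ 1) ∧ (∑ v, u v) ≤ 1 ∧
                  u s = 0 ∧ u t = 0 ∧ δ = fun v => dhat0 * u v})
    (L0 LΔ : V → V → ℝ)
    (hL0 : ∀ i j, i = j ∨ Relation.TransGen A i j → IsLongest A p i j (L0 i j))
    (hLΔ : ∀ i j, Relation.TransGen A i j → IsWorst A p Δ i j (LΔ i j))
    (hcrit : ∀ l : List V, IsPath A s t l → PathLen p l = L0 s t)
    (M' : ℕ) (M : ℝ) (hM : M = L0 s t + dhat0 * (M' : ℝ)) :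
    -- (a) nominal longest paths are differences of the earliest nominal schedule
    (∀ i j, Relation.TransGen A i j → L0 i j = L0 s j - L0 s i) ∧
    -- (b) worst-case longest paths for pairs with a job on the path
    (∀ i j, i ≠ s → i ≠ t → Relation.TransGen A i j →
        LΔ i j = L0 s j - L0 s i + dhat0) ∧
    (∀ j, (∃ k, k ≠ s ∧ Relation.TransGen A k j) → Relation.TransGen A s j →
        LΔ s j = L0 s j + dhat0) ∧
    -- (c) equivalence of the (Dom) constraints with the unitary (Dom) constraints
    (∀ (z h : V → ℝ), (∀ v, 0 ≤ h v ∧ h v ≤ 1) → h t = 0 →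
      ((z s = 0 ∧ (∀ v, 0 ≤ z v) ∧ z t ≤ M ∧
          ∀ i j, Relation.TransGen A i j →
            L0 i j + (LΔ i j - L0 i j) * h j ≤ z j - z i) ↔
        ((z s - L0 s s) / dhat0 = 0 ∧
          (∀ v, 0 ≤ (z v - L0 s v) / dhat0) ∧
          (z t - L0 s t) / dhat0 ≤ (M' : ℝ) ∧
          (∀ i j, i ≠ s → Relation.TransGen A i j →
            h j ≤ (z j - L0 s j) / dhat0 - (z i - L0 s i) / dhat0) ∧
          (∀ j, Relation.TransGen A s j → (∃ k, k ≠ s ∧ Relation.TransGen A k j) →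
            h j ≤ (z j - L0 s j) / dhat0 - (z s - L0 s s) / dhat0) ∧
          (∀ j, Relation.TransGen A s j → ¬ (∃ k, k ≠ s ∧ Relation.TransGen A k j) →
            0 ≤ (z j - L0 s j) / dhat0 - (z s - L0 s s) / dhat0)))) ∧
    -- (d) integrality of the h-components of extreme points of the (Dom) relaxation
    (∀ zh ∈ Set.extremePoints ℝ
        {zh : (V → ℝ) × (V → ℝ) |
          (zh.1 s = 0 ∧ (∀ v, 0 ≤ zh.1 v) ∧ zh.1 t ≤ M ∧
            ∀ i j, Relation.TransGen A i j →
              L0 i j + (LΔ i j - L0 i j) * zh.2 j ≤ zh.1 j - zh.1 i) ∧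
          (∀ v, 0 ≤ zh.2 v ∧ zh.2 v ≤ 1) ∧ zh.2 s = 1 ∧ zh.2 t = 0},
      ∀ v, v ≠ s → v ≠ t → ∃ n : ℤ, zh.2 v = (n : ℝ)) := by
  classical
  -- basic digraph facts
  have hpred : ∀ a b : V, Relation.TransGen A a b → ∃ c, A c b := by
    intro a b h
    induction h with
    | single h => exact ⟨_, h⟩
    | tail _ h _ => exact ⟨_, h⟩
  have hsucc : ∀ a b : V, Relation.TransGen A a b → ∃ c, A a c := by
    intro a b h
    induction h with
    | single h => exact ⟨_, h⟩
    | tail _ _ ih => exact ih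
  have hjs : ∀ i j, Relation.TransGen A i j → j ≠ s := by
    intro i j h hj
    subst hj
    obtain ⟨c, hc⟩ := hpred i j h
    exact hnos c hc
  have hit : ∀ i j, Relation.TransGen A i j → i ≠ t := by
    intro i j h hi
    subst hi
    obtain ⟨c, hc⟩ := hsucc i j h
    exact hnot c hc
  have hne_of_tg : ∀ i j, Relation.TransGen A i j → i ≠ j := by
    intro i j h hij
    subst hij
    exact hacyc i h
  have hPsi : ∀ i : V, ∃ l, IsPath A s i l := by
    intro i
    by_cases hi : i = s
    · subst hi; exact ⟨[i], CritAux.isPath_single i⟩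
    · exact CritAux.transGen_isPath (hsrc i hi)
  have hPit : ∀ i : V, ∃ l, IsPath A i t l := by
    intro i
    by_cases hi : i = t
    · subst hi; exact ⟨[i], CritAux.isPath_single i⟩
    · exact CritAux.transGen_isPath (hsink i hi)
  have hsv : ∀ v : V, s = v ∨ Relation.TransGen A s v := by
    intro v
    by_cases hv : v = s
    · exact Or.inl hv.symm
    · exact Or.inr (hsrc v hv)
  -- all i-j paths have the same nominal length
  have hconst : ∀ i j (l₁ l₂ : List V), IsPath A i j l₁ → IsPath A i j l₂ →
      PathLen p l₁ = PathLen p l₂ := by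
    intro i j l₁ l₂ h₁ h₂
    obtain ⟨P, hP⟩ := hPsi i
    obtain ⟨R, hR⟩ := hPit j
    have c1 := CritAux.isPath_append (q := p) hP h₁
    have c2 := CritAux.isPath_append (q := p) hP h₂
    have d1 := CritAux.isPath_append (q := p) c1.1 hR
    have d2 := CritAux.isPath_append (q := p) c2.1 hR
    have e1 := hcrit _ d1.1
    have e2 := hcrit _ d2.1
    rw [d1.2, c1.2] at e1
    rw [d2.2, c2.2] at e2
    linarith
  have hval : ∀ i j, (i = j ∨ Relation.TransGen A i j) → ∀ l, IsPath A i j l →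
      PathLen p l = L0 i j := by
    intro i j hij l hl
    obtain ⟨⟨l₀, hl₀, hlen₀⟩, -⟩ := hL0 i j hij
    rw [hconst i j l l₀ hl hl₀, hlen₀]
  have hL0ss : L0 s s = 0 := by
    have := hval s s (Or.inl rfl) [s] (CritAux.isPath_single s)
    simpa [PathLen] using this.symm
  have hL0nn : ∀ v, 0 ≤ L0 s v := by
    intro v
    obtain ⟨P, hP⟩ := hPsi v
    rw [← hval s v (hsv v) P hP]
    exact CritAux.pathLen_nonneg hp P
  -- part (a)
  have ha : ∀ i j, Relation.TransGen A i j → L0 i j = L0 s j - L0 s i := by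
    intro i j hij
    obtain ⟨P, hP⟩ := hPsi i
    obtain ⟨Q, hQ⟩ := CritAux.transGen_isPath hij
    have c := CritAux.isPath_append (q := p) hP hQ
    have hsj : Relation.TransGen A s j := by
      rcases hsv i with heq | htg
      · rw [← heq] at hij; exact hij
      · exact htg.trans hij
    have h1 := hval s j (Or.inr hsj) _ c.1
    rw [c.2] at h1
    have h2 : PathLen p P = L0 s i := hval s i (hsv i) P hP
    have h3 : PathLen p Q = L0 i j := hval i j (Or.inr hij) Q hQ
    linarith
  -- general form of (b)
  have hbgen : ∀ i j (k : V), k ≠ s → k ≠ t → Relation.TransGen A i j →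
      (∃ l, IsPath A i j l ∧ k ∈ l.dropLast) → LΔ i j = L0 i j + dhat0 := by
    intro i j k hks hkt hij hex
    obtain ⟨l₀, hl₀, hkl⟩ := hex
    obtain ⟨hmem, hub⟩ := hLΔ i j hij
    apply le_antisymm
    · obtain ⟨δ, hδ, l, hl, hlen⟩ := hmem
      rw [hΔ] at hδ
      obtain ⟨u, hu01, husum, hus, hut, rfl⟩ := hδ
      have hplen : PathLen (fun v => p v + dhat0 * u v) l
          = PathLen p l + dhat0 * ((l.dropLast.map u).sum) :=
        CritAux.pathLen_pert p u dhat0 l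
      have hlen' : PathLen p l + dhat0 * ((l.dropLast.map u).sum) = LΔ i j := by
        rw [← hplen]; exact hlen
      have h1 : PathLen p l = L0 i j := hval i j (Or.inr hij) l hl
      have hnd : l.dropLast.Nodup :=
        (List.dropLast_sublist l).nodup (CritAux.chain'_nodup hacyc l hl.2.1)
      have h2 : (l.dropLast.map u).sum ≤ 1 := by
        calc (l.dropLast.map u).sum = ∑ v ∈ l.dropLast.toFinset, u v :=
              (List.sum_toFinset u hnd).symm
          _ ≤ ∑ v, u v := Finset.sum_le_sum_of_subset_of_nonneg
              (Finset.subset_univ _) (fun v _ _ => (hu01 v).1)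
          _ ≤ 1 := husum
      nlinarith [hd0]
    · apply hub
      refine ⟨fun v => dhat0 * (if v = k then (1:ℝ) else 0), ?_, l₀, hl₀, ?_⟩
      · rw [hΔ]
        refine ⟨fun v => if v = k then (1:ℝ) else 0, ?_, ?_, ?_, ?_, rfl⟩
        · intro v; by_cases hv : v = k <;> simp [hv]
        · rw [Finset.sum_ite_eq' Finset.univ k (fun _ => (1:ℝ))]; simp
        · exact if_neg (fun hsk => hks hsk.symm)
        · exact if_neg (fun htk => hkt htk.symm)
      · have hplen := CritAux.pathLen_pert p (fun v => if v = k then (1:ℝ) else 0) dhat0 l₀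
        have hnd : l₀.dropLast.Nodup :=
          (List.dropLast_sublist l₀).nodup (CritAux.chain'_nodup hacyc l₀ hl₀.2.1)
        have hindsum : (l₀.dropLast.map (fun v => if v = k then (1:ℝ) else 0)).sum = 1 := by
          rw [← List.sum_toFinset _ hnd]
          rw [Finset.sum_ite_eq' l₀.dropLast.toFinset k (fun _ => (1:ℝ))]
          simp [List.mem_toFinset.2 hkl]
        calc PathLen (fun v => p v + dhat0 * (if v = k then (1:ℝ) else 0)) l₀
            = PathLen p l₀ + dhat0 * ((l₀.dropLast.map (fun v => if v = k then (1:ℝ) else 0)).sum) := hplen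
          _ = L0 i j + dhat0 := by rw [hval i j (Or.inr hij) l₀ hl₀, hindsum, mul_one]
  -- part (b1)
  have hb1 : ∀ i j, i ≠ s → i ≠ t → Relation.TransGen A i j →
      LΔ i j = L0 s j - L0 s i + dhat0 := by
    intro i j his hitt hij
    obtain ⟨l, hl⟩ := CritAux.transGen_isPath hij
    rw [hbgen i j i his hitt hij ⟨l, hl, CritAux.head_mem_dropLast hl (hne_of_tg i j hij)⟩,
      ha i j hij]
  -- part (b2)
  have hb2 : ∀ j, (∃ k, k ≠ s ∧ Relation.TransGen A k j) → Relation.TransGen A s j →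
      LΔ s j = L0 s j + dhat0 := by
    intro j hk hsj
    obtain ⟨k, hks, hkj⟩ := hk
    have hkt : k ≠ t := hit k j hkj
    obtain ⟨P, hP⟩ := hPsi k
    obtain ⟨Q, hQ⟩ := CritAux.transGen_isPath hkj
    have c := CritAux.isPath_append (q := p) hP hQ
    have hmem : k ∈ (P ++ Q.tail).dropLast := by
      obtain ⟨hneQ, hchQ, hhQ, hlQ⟩ := hQ
      cases Q with
      | nil => exact absurd rfl hneQ
      | cons b q' =>
        obtain rfl : b = k := by simpa using hhQ
        cases q' with
        | nil =>
          exfalso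
          have hbj : b = j := by simpa using hlQ
          exact hne_of_tg b j hkj hbj
        | cons e r =>
          simp only [List.tail_cons]
          rw [List.dropLast_append_of_ne_nil (by simp)]
          apply List.mem_append_left
          obtain ⟨hneP, hchP, hhP, hlP⟩ := hP
          have := List.getLast?_eq_getLast hneP
          rw [hlP] at this
          have hk' : P.getLast hneP = b := (Option.some_injective _ this.symm)
          rw [← hk']
          exact List.getLast_mem hneP
    have := hbgen s j k hks hkt hsj ⟨P ++ Q.tail, c.1, hmem⟩
    rw [this, ha s j hsj, hL0ss]
  -- degenerate pairs
  have hdeg : ∀ j, Relation.TransGen A s j → ¬(∃ k, k ≠ s ∧ Relation.TransGen A k j) →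
      L0 s j = 0 ∧ LΔ s j = 0 := by
    intro j hsj hk
    have hjs' : j ≠ s := hjs s j hsj
    have huniq : ∀ l, IsPath A s j l → l = [s, j] := by
      intro l hl
      obtain ⟨hne, hch, hh, hlast⟩ := hl
      cases l with
      | nil => exact absurd rfl hne
      | cons a l' =>
        obtain rfl : a = s := by simpa using hh
        cases l' with
        | nil =>
          exfalso
          have haj : a = j := by simpa using hlast
          exact hjs' haj.symm
        | cons c r =>
          have hAc : A a c := (List.isChain_cons_cons.1 hch).1
          have hcs : c ≠ a := fun h2 => hnos a (h2 ▸ hAc)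
          cases r with
          | nil =>
            have : c = j := by simpa using hlast
            rw [this]
          | cons e r' =>
            exfalso
            have hchc : List.Chain' A (c :: e :: r') := (List.isChain_cons_cons.1 hch).2
            have hlc : (c :: e :: r').getLast? = some j := by simpa using hlast
            exact hk ⟨c, hcs, CritAux.chain'_two_transGen hchc hlc⟩
    have h0 : L0 s j = 0 := by
      obtain ⟨l, hl⟩ := CritAux.transGen_isPath hsj
      have hlsj := huniq l hl
      rw [hlsj] at hl
      rw [← hval s j (Or.inr hsj) [s, j] hl]
      simp [PathLen, hps]
    refine ⟨h0, ?_⟩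
    obtain ⟨⟨δ, hδ, l', hl', hlen⟩, -⟩ := hLΔ s j hsj
    rw [hΔ] at hδ
    obtain ⟨u, hu01, husum, hus, hut, rfl⟩ := hδ
    rw [huniq l' hl'] at hlen
    rw [← hlen]
    simp [PathLen, hps, hus]
  -- classification of coefficients
  have hclass : ∀ i j, Relation.TransGen A i j →
      (L0 i j = L0 s j - L0 s i ∧ LΔ i j = L0 s j - L0 s i + dhat0) ∨
      (i = s ∧ L0 s j = 0 ∧ LΔ s j = 0) := by
    intro i j hij
    by_cases hi : i = s
    · subst hi
      by_cases hk : ∃ k, k ≠ i ∧ Relation.TransGen A k j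
      · left
        refine ⟨ha i j hij, ?_⟩
        rw [hb2 j hk hij, hL0ss]
        ring
      · right
        exact ⟨rfl, (hdeg j hij hk).1, (hdeg j hij hk).2⟩
    · exact Or.inl ⟨ha i j hij, hb1 i j hi (hit i j hij) hij⟩
  -- z dominates the earliest nominal schedule
  have hgez : ∀ (z h : V → ℝ), z s = 0 → (∀ v, 0 ≤ h v) →
      (∀ i j, Relation.TransGen A i j → L0 i j + (LΔ i j - L0 i j) * h j ≤ z j - z i) →
      ∀ v, L0 s v ≤ z v := by
    intro z h hz0 hh hdom v
    by_cases hv : v = s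
    · subst hv; rw [hz0, hL0ss]
    · have hsvv : Relation.TransGen A s v := hsrc v hv
      have hd := hdom s v hsvv
      rw [hz0] at hd
      rcases hclass s v hsvv with ⟨h1, h2⟩ | ⟨-, h3, h4⟩
      · rw [h1, h2, hL0ss] at hd
        have := mul_nonneg hd0.le (hh v)
        nlinarith [hd]
      · rw [h3, h4] at hd
        rw [h3]
        nlinarith [hd]
  refine ⟨ha, hb1, hb2, ?_, ?_⟩
  · -- part (c)
    intro z h hh hht
    constructor
    · rintro ⟨hz0, hznn, hztM, hdom⟩
      have hge : ∀ v, L0 s v ≤ z v := hgez z h hz0 (fun v => (hh v).1) hdom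
      refine ⟨?_, ?_, ?_, ?_, ?_, ?_⟩
      · rw [hz0, hL0ss]; simp
      · intro v
        exact div_nonneg (sub_nonneg.2 (hge v)) hd0.le
      · rw [div_le_iff₀ hd0]
        rw [hM] at hztM
        nlinarith [hztM]
      · intro i j hi hij
        rcases hclass i j hij with ⟨h1, h2⟩ | ⟨rfl, -, -⟩
        · have hd := hdom i j hij
          rw [h1, h2] at hd
          rw [div_sub_div_same, le_div_iff₀ hd0]
          nlinarith [hd]
        · exact absurd rfl hi
      · intro j hsj hk
        have hd := hdom s j hsj
        rw [hb2 j hk hsj] at hd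
        rw [div_sub_div_same, le_div_iff₀ hd0]
        nlinarith [hd, hz0, hL0ss]
      · intro j hsj hk
        have h6 : 0 ≤ (z j - L0 s j) / dhat0 := div_nonneg (sub_nonneg.2 (hge j)) hd0.le
        rw [hz0, hL0ss]
        simpa using h6
    · rintro ⟨u1, u2, u3, u4, u5, u6⟩
      have hzs : z s = 0 := by
        rcases div_eq_zero_iff.1 u1 with h1 | h1
        · rw [hL0ss] at h1; linarith
        · exact absurd h1 hd0.ne'
      have hge : ∀ v, L0 s v ≤ z v := by
        intro v
        have h2 := (le_div_iff₀ hd0).1 (u2 v)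
        nlinarith [h2]
      refine ⟨hzs, ?_, ?_, ?_⟩
      · intro v
        linarith [hge v, hL0nn v]
      · have h3 := (div_le_iff₀ hd0).1 u3
        rw [hM]
        nlinarith [h3]
      · intro i j hij
        by_cases hi : i = s
        · rw [hi]
          rw [hi] at hij
          by_cases hk : ∃ k, k ≠ s ∧ Relation.TransGen A k j
          · have h2 := hb2 j hk hij
            have hu := u5 j hij hk
            rw [div_sub_div_same, le_div_iff₀ hd0] at hu
            rw [h2]
            nlinarith [hu, hzs, hL0ss]
          · obtain ⟨hd1, hd2⟩ := hdeg j hij hk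
            rw [hd1, hd2, hzs]
            have h5 := hge j
            rw [hd1] at h5
            nlinarith [h5]
        · rcases hclass i j hij with ⟨h1, h2⟩ | ⟨rfl, -, -⟩
          · have hu := u4 i j hi hij
            rw [div_sub_div_same, le_div_iff₀ hd0] at hu
            rw [h1, h2]
            nlinarith [hu]
          · exact absurd rfl hi
  · -- part (d)
    rintro ⟨z, h⟩ hzh v₀ hv0s hv0t
    rw [mem_extremePoints] at hzh
    obtain ⟨hmem, hext⟩ := hzh
    simp only [Set.mem_setOf_eq] at hmem
    obtain ⟨⟨hz0, hznn, hztM, hdom⟩, hh01, hhs1, hht0⟩ := hmem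
    show ∃ n : ℤ, h v₀ = (n : ℝ)
    by_contra hfrac
    have hge : ∀ v, L0 s v ≤ z v := hgez z h hz0 (fun v => (hh01 v).1) hdom
    set W : V → ℝ := fun v => (z v - L0 s v) / dhat0 with hWsetdef
    have hWdef : ∀ v, W v = (z v - L0 s v) / dhat0 := fun _ => rfl
    have hzW : ∀ v, z v = L0 s v + dhat0 * W v := by
      intro v
      rw [hWdef v]
      field_simp
      ring
    set dW : V → ℝ := fun v => if ∃ n : ℤ, W v = (n : ℝ) then 0 else 1 with hdWsetdef
    have hdWdef : ∀ v, dW v = if ∃ n : ℤ, W v = (n : ℝ) then 0 else 1 := fun _ => rfl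
    set dG : V → ℝ := fun v => if ∃ n : ℤ, W v - h v = (n : ℝ) then 0 else 1 with hdGsetdef
    have hdGdef : ∀ v, dG v = if ∃ n : ℤ, W v - h v = (n : ℝ) then 0 else 1 := fun _ => rfl
    have hd01 : ∀ v, (dW v = 0 ∨ dW v = 1) ∧ (dG v = 0 ∨ dG v = 1) := by
      intro v
      constructor
      · rw [hdWdef v]; split_ifs <;> simp
      · rw [hdGdef v]; split_ifs <;> simp
    have hIntdiff : ∀ x y : ℝ, (∃ n : ℤ, x - y = (n : ℝ)) →
        ((∃ n : ℤ, x = (n : ℝ)) ↔ (∃ n : ℤ, y = (n : ℝ))) := by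
      rintro x y ⟨n, hn⟩
      constructor
      · rintro ⟨m, hm⟩
        exact ⟨m - n, by push_cast; linarith⟩
      · rintro ⟨m, hm⟩
        exact ⟨m + n, by push_cast; linarith⟩
    have hifeq : ∀ x y : ℝ, (∃ n : ℤ, x - y = (n : ℝ)) →
        ((if ∃ n : ℤ, x = (n : ℝ) then (0:ℝ) else 1) =
          if ∃ n : ℤ, y = (n : ℝ) then (0:ℝ) else 1) := by
      intro x y hxy
      by_cases hx : ∃ n : ℤ, x = (n : ℝ)
      · rw [if_pos hx, if_pos ((hIntdiff x y hxy).1 hx)]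
      · rw [if_neg hx, if_neg (fun hy => hx ((hIntdiff x y hxy).2 hy))]
    have hWs : W s = 0 := by rw [hWdef s, hz0, hL0ss]; simp
    have hdWs : dW s = 0 := by
      rw [hdWdef s]
      exact if_pos ⟨0, by rw [hWs]; simp⟩
    have hdGs : dG s = 0 := by
      rw [hdGdef s]
      exact if_pos ⟨-1, by rw [hWs, hhs1]; push_cast; ring⟩
    have hdGt : dG t = dW t := by
      rw [hdGdef t, hdWdef t, hht0, sub_zero]
    have hzpos : ∀ v, ¬ (∃ n : ℤ, W v = (n : ℝ)) → 0 < z v := by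
      intro v hv
      rcases eq_or_lt_of_le (le_trans (hL0nn v) (hge v)) with h1 | h1
      · exfalso
        apply hv
        refine ⟨0, ?_⟩
        rw [hWdef v]
        have h2 : L0 s v = 0 := le_antisymm (h1 ▸ hge v) (hL0nn v)
        rw [h2, ← h1]
        simp
      · exact h1
    have hpertkey : ∀ (σ base coef e : ℝ), (σ = 1 ∨ σ = -1) → 0 ≤ e → 0 ≤ base →
        (coef = 0 ∨ (-1 ≤ coef ∧ coef ≤ 1 ∧ e ≤ base)) → 0 ≤ base + σ * (e * coef) := by
      intro σ base coef e hσ he hb hc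
      rcases hc with rfl | ⟨h1, h2, h3⟩
      · simpa using hb
      · have k1 : e * coef ≤ e * 1 := mul_le_mul_of_nonneg_left h2 he
        have k2 : e * (-1) ≤ e * coef := mul_le_mul_of_nonneg_left h1 he
        rcases hσ with rfl | rfl <;> nlinarith
    have hVne : (Finset.univ : Finset V).Nonempty := ⟨s, Finset.mem_univ s⟩
    have hVVne : (Finset.univ : Finset (V × V)).Nonempty := ⟨(s, s), Finset.mem_univ _⟩
    set F : V × V → ℝ :=
      fun q => z q.2 - z q.1 - L0 q.1 q.2 - (LΔ q.1 q.2 - L0 q.1 q.2) * h q.2 with hFsetdef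
    set e1 : V → ℝ := fun v => if 0 < z v then z v / dhat0 else 1 with he1def
    set e3 : V × V → ℝ := fun q => if 0 < F q then F q / dhat0 else 1 with he3def
    set e4 : V → ℝ := fun v => if 0 < h v then h v else 1 with he4def
    set e5 : V → ℝ := fun v => if h v < 1 then 1 - h v else 1 with he5def
    set e2 : ℝ := if z t < M then (M - z t) / dhat0 else 1 with he2def
    set ε : ℝ := min 1 (min (Finset.univ.inf' hVne e1) (min e2 (min (Finset.univ.inf' hVVne e3)
      (min (Finset.univ.inf' hVne e4) (Finset.univ.inf' hVne e5))))) with hεdef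
    have hεpos : 0 < ε := by
      rw [hεdef]
      refine lt_min one_pos (lt_min ?_ (lt_min ?_ (lt_min ?_ (lt_min ?_ ?_))))
      · rw [Finset.lt_inf'_iff]
        intro v _
        show (0:ℝ) < if 0 < z v then z v / dhat0 else 1
        split_ifs with hv
        · exact div_pos hv hd0
        · exact one_pos
      · show (0:ℝ) < if z t < M then (M - z t) / dhat0 else 1
        split_ifs with hv
        · exact div_pos (by linarith) hd0
        · exact one_pos
      · rw [Finset.lt_inf'_iff]
        intro q _
        show (0:ℝ) < if 0 < F q then F q / dhat0 else 1
        split_ifs with hv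
        · exact div_pos hv hd0
        · exact one_pos
      · rw [Finset.lt_inf'_iff]
        intro v _
        show (0:ℝ) < if 0 < h v then h v else 1
        split_ifs with hv
        · exact hv
        · exact one_pos
      · rw [Finset.lt_inf'_iff]
        intro v _
        show (0:ℝ) < if h v < 1 then 1 - h v else 1
        split_ifs with hv
        · linarith
        · exact one_pos
    have hεe1 : ∀ v, 0 < z v → ε ≤ z v / dhat0 := by
      intro v hv
      have b1 : ε ≤ Finset.univ.inf' hVne e1 := by
        rw [hεdef]
        exact le_trans (min_le_right _ _) (min_le_left _ _)
      refine le_trans (le_trans b1 (Finset.inf'_le e1 (Finset.mem_univ v))) ?_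
      show (if 0 < z v then z v / dhat0 else 1) ≤ z v / dhat0
      rw [if_pos hv]
    have hεe2 : z t < M → ε ≤ (M - z t) / dhat0 := by
      intro hv
      have b1 : ε ≤ e2 := by
        rw [hεdef]
        exact le_trans (min_le_right _ _) (le_trans (min_le_right _ _) (min_le_left _ _))
      refine le_trans b1 ?_
      show (if z t < M then (M - z t) / dhat0 else 1) ≤ (M - z t) / dhat0
      rw [if_pos hv]
    have hεe3 : ∀ q : V × V, 0 < F q → ε ≤ F q / dhat0 := by
      intro q hv
      have b1 : ε ≤ Finset.univ.inf' hVVne e3 := by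
        rw [hεdef]
        exact le_trans (min_le_right _ _) (le_trans (min_le_right _ _)
          (le_trans (min_le_right _ _) (min_le_left _ _)))
      refine le_trans (le_trans b1 (Finset.inf'_le e3 (Finset.mem_univ q))) ?_
      show (if 0 < F q then F q / dhat0 else 1) ≤ F q / dhat0
      rw [if_pos hv]
    have hεe4 : ∀ v, 0 < h v → ε ≤ h v := by
      intro v hv
      have b1 : ε ≤ Finset.univ.inf' hVne e4 := by
        rw [hεdef]
        exact le_trans (min_le_right _ _) (le_trans (min_le_right _ _)
          (le_trans (min_le_right _ _) (le_trans (min_le_right _ _) (min_le_left _ _))))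
      refine le_trans (le_trans b1 (Finset.inf'_le e4 (Finset.mem_univ v))) ?_
      show (if 0 < h v then h v else 1) ≤ h v
      rw [if_pos hv]
    have hεe5 : ∀ v, h v < 1 → ε ≤ 1 - h v := by
      intro v hv
      have b1 : ε ≤ Finset.univ.inf' hVne e5 := by
        rw [hεdef]
        exact le_trans (min_le_right _ _) (le_trans (min_le_right _ _)
          (le_trans (min_le_right _ _) (le_trans (min_le_right _ _) (min_le_right _ _))))
      refine le_trans (le_trans b1 (Finset.inf'_le e5 (Finset.mem_univ v))) ?_
      show (if h v < 1 then 1 - h v else 1) ≤ 1 - h v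
      rw [if_pos hv]
    have comp1 : ∀ σ : ℝ, z s + σ * (ε * (dhat0 * dW s)) = 0 := by
      intro σ; rw [hdWs, hz0]; ring
    have comp2 : ∀ σ : ℝ, (σ = 1 ∨ σ = -1) → ∀ v, 0 ≤ z v + σ * (ε * (dhat0 * dW v)) := by
      intro σ hσ v
      by_cases hv : ∃ n : ℤ, W v = (n : ℝ)
      · rw [hdWdef v, if_pos hv]
        simpa using hznn v
      · have hzv := hzpos v hv
        have hεb := hεe1 v hzv
        have hkey := hpertkey σ (z v / dhat0) 1 ε hσ hεpos.le (div_nonneg (hznn v) hd0.le)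
          (Or.inr ⟨by norm_num, le_refl 1, hεb⟩)
        have hmul : 0 ≤ dhat0 * (z v / dhat0 + σ * (ε * 1)) := mul_nonneg hd0.le hkey
        rw [hdWdef v, if_neg hv]
        have hid : dhat0 * (z v / dhat0 + σ * (ε * 1)) = z v + σ * (ε * (dhat0 * 1)) := by
          field_simp
        rw [hid] at hmul
        exact hmul
    have comp3 : ∀ σ : ℝ, (σ = 1 ∨ σ = -1) → z t + σ * (ε * (dhat0 * dW t)) ≤ M := by
      intro σ hσ
      rcases eq_or_lt_of_le hztM with heq | hlt
      · have hWt : W t = (M' : ℝ) := by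
          rw [hWdef t, heq, hM]
          field_simp
          ring
        have hdWt : dW t = 0 := by
          rw [hdWdef t]
          exact if_pos ⟨(M' : ℤ), by rw [hWt]; push_cast; ring⟩
        rw [hdWt]
        simp [heq]
      · have hεb := hεe2 hlt
        have hcoef : -(dW t) = 0 ∨ (-1 ≤ -(dW t) ∧ -(dW t) ≤ 1 ∧ ε ≤ (M - z t) / dhat0) := by
          rcases (hd01 t).1 with h1 | h1
          · left; rw [h1]; ring
          · right; rw [h1]; exact ⟨le_refl _, by norm_num, hεb⟩
        have hkey := hpertkey σ ((M - z t) / dhat0) (-(dW t)) ε hσ hεpos.le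
          (div_nonneg (by linarith) hd0.le) hcoef
        have hmul := mul_nonneg hd0.le hkey
        have hid : dhat0 * ((M - z t) / dhat0 + σ * (ε * (-(dW t))))
            = (M - z t) - σ * (ε * (dhat0 * dW t)) := by
          field_simp
          ring
        rw [hid] at hmul
        linarith
    have comp4 : ∀ σ : ℝ, (σ = 1 ∨ σ = -1) → ∀ i j, Relation.TransGen A i j →
        L0 i j + (LΔ i j - L0 i j) * (h j + σ * (ε * (dW j - dG j))) ≤
          (z j + σ * (ε * (dhat0 * dW j))) - (z i + σ * (ε * (dhat0 * dW i))) := by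
      intro σ hσ i j hij
      rcases hclass i j hij with ⟨h1, h2⟩ | ⟨hi, h3, h4⟩
      · have hF0 : 0 ≤ F (i, j) := by
          show 0 ≤ z j - z i - L0 i j - (LΔ i j - L0 i j) * h j
          linarith [hdom i j hij]
        have hFd : F (i, j) = dhat0 * ((W j - h j) - W i) := by
          show z j - z i - L0 i j - (LΔ i j - L0 i j) * h j = _
          rw [h1, h2, hzW i, hzW j]
          ring
        have hbase : 0 ≤ (W j - h j) - W i := by
          by_contra hB
          push_neg at hB
          rw [hFd] at hF0
          nlinarith [mul_neg_of_pos_of_neg hd0 hB]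
        have hcoef : (dG j - dW i) = 0 ∨
            (-1 ≤ dG j - dW i ∧ dG j - dW i ≤ 1 ∧ ε ≤ (W j - h j) - W i) := by
          rcases eq_or_lt_of_le hbase with hB0 | hBpos
          · left
            have hdiff : dG j = dW i := by
              rw [hdGdef j, hdWdef i]
              exact hifeq (W j - h j) (W i) ⟨0, by push_cast; linarith⟩
            rw [hdiff]; ring
          · right
            have hFpos : 0 < F (i, j) := by
              rw [hFd]; exact mul_pos hd0 hBpos
            have hεb := hεe3 (i, j) hFpos
            rw [hFd, mul_comm, mul_div_assoc, div_self hd0.ne', mul_one] at hεb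
            refine ⟨?_, ?_, hεb⟩
            · rcases (hd01 j).2 with hg | hg <;> rcases (hd01 i).1 with hw | hw <;>
                rw [hg, hw] <;> norm_num
            · rcases (hd01 j).2 with hg | hg <;> rcases (hd01 i).1 with hw | hw <;>
                rw [hg, hw] <;> norm_num
        have hkey := hpertkey σ ((W j - h j) - W i) (dG j - dW i) ε hσ hεpos.le hbase hcoef
        have hmul := mul_nonneg hd0.le hkey
        have hid : dhat0 * (((W j - h j) - W i) + σ * (ε * (dG j - dW i)))
            = ((z j + σ * (ε * (dhat0 * dW j))) - (z i + σ * (ε * (dhat0 * dW i))))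
              - (L0 s j - L0 s i) - dhat0 * (h j + σ * (ε * (dW j - dG j))) := by
          rw [hzW i, hzW j]
          ring
        rw [hid] at hmul
        rw [h1, h2]
        linarith [hmul]
      · rw [hi, h3, h4, hdWs, hz0]
        have h5 := comp2 σ hσ j
        linarith [h5]
    have comp5 : ∀ σ : ℝ, (σ = 1 ∨ σ = -1) → ∀ v,
        0 ≤ h v + σ * (ε * (dW v - dG v)) ∧ h v + σ * (ε * (dW v - dG v)) ≤ 1 := by
      intro σ hσ v
      have hcb : -1 ≤ dW v - dG v ∧ dW v - dG v ≤ 1 := by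
        rcases (hd01 v).1 with h1 | h1 <;> rcases (hd01 v).2 with h2 | h2 <;>
          rw [h1, h2] <;> norm_num
      constructor
      · rcases eq_or_lt_of_le (hh01 v).1 with h0 | h0
        · have hdiff : dW v = dG v := by
            rw [hdWdef v, hdGdef v]
            exact hifeq (W v) (W v - h v) ⟨0, by push_cast; linarith⟩
          rw [hdiff]
          have hidq : h v + σ * (ε * (dG v - dG v)) = h v := by ring
          rw [hidq]
          linarith
        · have := hpertkey σ (h v) (dW v - dG v) ε hσ hεpos.le (hh01 v).1
            (Or.inr ⟨hcb.1, hcb.2, hεe4 v h0⟩)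
          linarith
      · rcases eq_or_lt_of_le (hh01 v).2 with h0 | h0
        · have hdiff : dW v = dG v := by
            rw [hdWdef v, hdGdef v]
            exact hifeq (W v) (W v - h v) ⟨1, by push_cast; linarith⟩
          rw [hdiff]
          have hidq : h v + σ * (ε * (dG v - dG v)) = h v := by ring
          rw [hidq]
          linarith
        · have hcb2 : -1 ≤ dG v - dW v ∧ dG v - dW v ≤ 1 := by
            constructor <;> linarith [hcb.1, hcb.2]
          have := hpertkey σ (1 - h v) (dG v - dW v) ε hσ hεpos.le (by linarith)
            (Or.inr ⟨hcb2.1, hcb2.2, hεe5 v h0⟩)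
          linarith
    have comp6 : ∀ σ : ℝ, h s + σ * (ε * (dW s - dG s)) = 1 := by
      intro σ; rw [hdWs, hdGs, hhs1]; ring
    have comp7 : ∀ σ : ℝ, h t + σ * (ε * (dW t - dG t)) = 0 := by
      intro σ; rw [hdGt, hht0]; ring
    have hmemb : ∀ σ : ℝ, (σ = 1 ∨ σ = -1) →
        ((fun v => z v + σ * (ε * (dhat0 * dW v)), fun v => h v + σ * (ε * (dW v - dG v))) :
          (V → ℝ) × (V → ℝ)) ∈
          {zh : (V → ℝ) × (V → ℝ) |
            (zh.1 s = 0 ∧ (∀ v, 0 ≤ zh.1 v) ∧ zh.1 t ≤ M ∧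
              ∀ i j, Relation.TransGen A i j →
                L0 i j + (LΔ i j - L0 i j) * zh.2 j ≤ zh.1 j - zh.1 i) ∧
            (∀ v, 0 ≤ zh.2 v ∧ zh.2 v ≤ 1) ∧ zh.2 s = 1 ∧ zh.2 t = 0} := by
      intro σ hσ
      exact ⟨⟨comp1 σ, comp2 σ hσ, comp3 σ hσ, comp4 σ hσ⟩, comp5 σ hσ, comp6 σ, comp7 σ⟩
    have hx1 := hmemb 1 (Or.inl rfl)
    have hx2 := hmemb (-1) (Or.inr rfl)
    have hseg : ((z, h) : (V → ℝ) × (V → ℝ)) ∈ openSegment ℝ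
        ((fun v => z v + 1 * (ε * (dhat0 * dW v)), fun v => h v + 1 * (ε * (dW v - dG v))) :
          (V → ℝ) × (V → ℝ))
        ((fun v => z v + (-1) * (ε * (dhat0 * dW v)), fun v => h v + (-1) * (ε * (dW v - dG v))) :
          (V → ℝ) × (V → ℝ)) := by
      refine ⟨1/2, 1/2, by norm_num, by norm_num, by norm_num, ?_⟩
      refine Prod.ext ?_ ?_ <;> funext v <;>
        simp only [Prod.fst_add, Prod.snd_add, Prod.smul_fst, Prod.smul_snd, Pi.add_apply,
          Pi.smul_apply, smul_eq_mul] <;> ring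
    obtain ⟨heq1, -⟩ := hext _ hx1 _ hx2 hseg
    have hfst := congrFun (congrArg Prod.fst heq1) v₀
    have hsnd := congrFun (congrArg Prod.snd heq1) v₀
    dsimp only at hfst hsnd
    by_cases hWi : ∃ n : ℤ, W v₀ = (n : ℝ)
    · by_cases hGi : ∃ n : ℤ, W v₀ - h v₀ = (n : ℝ)
      · obtain ⟨m, hm⟩ := hWi
        obtain ⟨n, hn⟩ := hGi
        exact hfrac ⟨m - n, by push_cast; linarith⟩
      · have h1 : dW v₀ = 0 := by rw [hdWdef v₀]; exact if_pos hWi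
        have h2 : dG v₀ = 1 := by rw [hdGdef v₀]; exact if_neg hGi
        rw [h1, h2] at hsnd
        nlinarith [hsnd, hεpos]
    · have h1 : dW v₀ = 1 := by rw [hdWdef v₀]; exact if_neg hWi
      rw [h1] at hfst
      nlinarith [hfst, hεpos, hd0, mul_pos hεpos hd0]
end
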